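/- arXiv:1912.02571 — 4 statements merged into one kernel-verified Lean document; each statement's English description precedes it below -/
import Mathlib

section
/- For all j ∈ ℕ and s₀ ∈ [0,T) it holds (as an identity in [0,∞]) that ∫_{s₀}^T (s₁−s₀)^{−β} ϱ(s₀,s₁)^{−γ} ∫_{s₁}^T (s₂−s₁)^{−β} ϱ(s₁,s₂)^{−γ} ⋯ ∫_{s_{j−1}}^T (s_j−s_{j−1})^{−β} ϱ(s_{j−1},s_j)^{−γ} ds_j ⋯ ds₂ ds₁ = (T−s₀)^{j(1+γ−β)} · ∏_{i=0}^{j−1} ∫₀¹ (1−s)^{i(1+γ−β)} s^{−β} ρ(s)^{−γ} ds. -/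
open MeasureTheory
open scoped ENNReal

/-- The iterated integral
`∫_{s₀}^T (s₁−s₀)^{−β} ϱ(s₀,s₁)^{−γ} ⋯ ∫_{s_{j−1}}^T (s_j−s_{j−1})^{−β} ϱ(s_{j−1},s_j)^{−γ} ds_j ⋯ ds₁`,
interpreted as an iterated lower Lebesgue integral with values in `[0,∞]`. -/
noncomputable def iterInt (T β γ : ℝ) (ϱ : ℝ → ℝ → ℝ) : ℕ → ℝ → ℝ≥0∞
  | 0, _ => 1
  | j + 1, s₀ =>
      ∫⁻ s in Set.Ioo s₀ T,
        ENNReal.ofReal ((s - s₀) ^ (-β) * ϱ s₀ s ^ (-γ)) * iterInt T β γ ϱ j s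

lemma lintegral_affine (a c : ℝ) (hc : 0 < c) (f : ℝ → ℝ≥0∞) (hf : Measurable f) :
    ∫⁻ s, f ((s - a) / c) = ENNReal.ofReal c * ∫⁻ u, f u := by
  have h1 : ∫⁻ s, f ((s - a) / c) = ∫⁻ s, f (s / c) := by
    have := lintegral_sub_right_eq_self (μ := (volume : Measure ℝ)) (fun s => f (s / c)) a
    simpa using this
  rw [h1]
  have h2 : ∫⁻ s, f (s / c) = ∫⁻ s, f (c⁻¹ * s) := by
    simp_rw [div_eq_inv_mul]
  rw [h2]
  have h3 : ∫⁻ s, f (c⁻¹ * s) = ∫⁻ y, f y ∂(Measure.map (fun x => c⁻¹ * x) volume) := by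
    rw [lintegral_map hf (measurable_const_mul _)]
  rw [h3, Real.map_volume_mul_left (by positivity : c⁻¹ ≠ 0)]
  simp [abs_of_pos hc, lintegral_smul_measure]

lemma lintegral_Ioo_affine (a b : ℝ) (hab : a < b) (f : ℝ → ℝ≥0∞) (hf : Measurable f) :
    ∫⁻ s in Set.Ioo a b, f ((s - a) / (b - a))
      = ENNReal.ofReal (b - a) * ∫⁻ u in Set.Ioo (0:ℝ) 1, f u := by
  set c := b - a with hc
  have hcpos : 0 < c := by simp [hc, sub_pos, hab]
  have hF : Measurable ((Set.Ioo (0:ℝ) 1).indicator f) :=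
    hf.indicator measurableSet_Ioo
  have key : ∀ s : ℝ, (Set.Ioo a b).indicator (fun s => f ((s - a) / c)) s
      = (Set.Ioo (0:ℝ) 1).indicator f ((s - a) / c) := by
    intro s
    have hmem : s ∈ Set.Ioo a b ↔ (s - a) / c ∈ Set.Ioo (0:ℝ) 1 := by
      constructor
      · rintro ⟨h1, h2⟩
        constructor
        · apply div_pos (by linarith) hcpos
        · rw [div_lt_one hcpos]; simp [hc]; linarith
      · rintro ⟨h1, h2⟩
        rw [div_lt_one hcpos] at h2
        rw [lt_div_iff₀ hcpos] at h1
        constructor <;> [nlinarith; nlinarith [hc ▸ h2]]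
    by_cases h : s ∈ Set.Ioo a b
    · rw [Set.indicator_of_mem h, Set.indicator_of_mem (hmem.1 h)]
    · rw [Set.indicator_of_notMem h, Set.indicator_of_notMem (fun hx => h (hmem.2 hx))]
  rw [← lintegral_indicator measurableSet_Ioo, ← lintegral_indicator measurableSet_Ioo]
  calc ∫⁻ s, (Set.Ioo a b).indicator (fun s => f ((s - a) / c)) s
      = ∫⁻ s, (Set.Ioo (0:ℝ) 1).indicator f ((s - a) / c) := by simp_rw [key]
    _ = ENNReal.ofReal c * ∫⁻ u, (Set.Ioo (0:ℝ) 1).indicator f u :=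
        lintegral_affine a c hcpos _ hF
lemma main_ind (T β γ : ℝ) (hT : 0 < T) (hβ : 0 < β) (hγ : 0 < γ)
    (ρ : ℝ → ℝ) (hρmeas : Measurable ρ) (hρpos : ∀ r ∈ Set.Ioo (0 : ℝ) 1, 0 < ρ r)
    (ϱ : ℝ → ℝ → ℝ)
    (hϱ : ∀ t ∈ Set.Ico (0 : ℝ) T, ∀ s ∈ Set.Ioc t T,
      ϱ t s = (T - t)⁻¹ * ρ ((s - t) / (T - t)))
    (j : ℕ) : ∀ s₀ ∈ Set.Ico (0 : ℝ) T,
    iterInt T β γ ϱ j s₀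
      = ENNReal.ofReal ((T - s₀) ^ ((j : ℝ) * (1 + γ - β)))
        * ∏ i ∈ Finset.range j,
            ∫⁻ s in Set.Ioo (0 : ℝ) 1,
              ENNReal.ofReal ((1 - s) ^ ((i : ℝ) * (1 + γ - β)) * s ^ (-β) * ρ s ^ (-γ)) := by
  induction j with
  | zero => intro s₀ hs₀; simp [iterInt]
  | succ j ih =>
    intro s₀ hs₀
    obtain ⟨hs₀0, hs₀T⟩ := hs₀
    set E : ℝ := 1 + γ - β with hE
    set c : ℝ := T - s₀ with hcdef
    have hc : 0 < c := by simp [hcdef]; linarith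
    set f : ℝ → ℝ≥0∞ := fun u =>
      ENNReal.ofReal ((1 - u) ^ ((j : ℝ) * E) * u ^ (-β) * ρ u ^ (-γ)) with hfdef
    have hfmeas : Measurable f := by
      apply ENNReal.measurable_ofReal.comp
      fun_prop
    have hg0 : Measurable fun s : ℝ => f ((s - s₀) / c) :=
      hfmeas.comp ((measurable_id.sub measurable_const).div_const c)
    set P : ℝ≥0∞ := ∏ i ∈ Finset.range j,
        ∫⁻ s in Set.Ioo (0 : ℝ) 1,
          ENNReal.ofReal ((1 - s) ^ ((i : ℝ) * E) * s ^ (-β) * ρ s ^ (-γ)) with hPdef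
    set K : ℝ := c ^ ((j : ℝ) * E + γ - β) with hKdef
    have hK0 : 0 ≤ K := Real.rpow_nonneg hc.le _
    have step1 : iterInt T β γ ϱ (j + 1) s₀
        = ∫⁻ s in Set.Ioo s₀ T, ENNReal.ofReal K * (f ((s - s₀) / c) * P) := by
      show (∫⁻ s in Set.Ioo s₀ T,
        ENNReal.ofReal ((s - s₀) ^ (-β) * ϱ s₀ s ^ (-γ)) * iterInt T β γ ϱ j s) = _
      apply setLIntegral_congr_fun measurableSet_Ioo
      intro s hs
      obtain ⟨hs1, hs2⟩ := hs
      set u : ℝ := (s - s₀) / c with hudef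
      have hu0 : 0 < u := div_pos (by linarith) hc
      have hu1 : u < 1 := by rw [div_lt_one hc]; simp [hcdef]; linarith
      have hρu : 0 < ρ u := hρpos u ⟨hu0, hu1⟩
      have hsu : s - s₀ = c * u := by rw [hudef]; field_simp [hc.ne']
      have hTs : T - s = c * (1 - u) := by
        have h := hsu.symm
        nlinarith [h]
      have hϱeq : ϱ s₀ s = c⁻¹ * ρ u := by
        rw [hϱ s₀ ⟨hs₀0, hs₀T⟩ s ⟨hs1, hs2.le⟩]
      have hϱ0 : 0 < ϱ s₀ s := by rw [hϱeq]; positivity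
      have hih : iterInt T β γ ϱ j s
          = ENNReal.ofReal ((T - s) ^ ((j : ℝ) * E)) * P :=
        ih s ⟨by linarith, hs2⟩
      have hKsplit : K = c ^ ((j : ℝ) * E) * c ^ γ * c ^ (-β) := by
        rw [hKdef, show (j : ℝ) * E + γ - β = (j : ℝ) * E + γ + (-β) by ring,
          Real.rpow_add hc, Real.rpow_add hc]
      have hreal : (s - s₀) ^ (-β) * ϱ s₀ s ^ (-γ) * (T - s) ^ ((j : ℝ) * E)
          = K * ((1 - u) ^ ((j : ℝ) * E) * u ^ (-β) * ρ u ^ (-γ)) := by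
        rw [hϱeq, hsu, hTs, Real.mul_rpow hc.le hu0.le,
          Real.mul_rpow (inv_nonneg.mpr hc.le) hρu.le,
          Real.mul_rpow hc.le (by linarith : (0:ℝ) ≤ 1 - u),
          Real.inv_rpow hc.le, ← Real.rpow_neg hc.le, neg_neg, hKsplit]
        ring
      beta_reduce
      rw [hih, ← mul_assoc, ← ENNReal.ofReal_mul
        (mul_nonneg (Real.rpow_nonneg (by linarith) _) (Real.rpow_nonneg hϱ0.le _)),
        hreal, ENNReal.ofReal_mul hK0]
      simp only [hfdef]
      ring
    rw [step1, lintegral_const_mul _ (hg0.mul_const P),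
      lintegral_mul_const _ hg0, lintegral_Ioo_affine s₀ T hs₀T f hfmeas]
    have hfin : ∏ i ∈ Finset.range (j + 1),
        (∫⁻ s in Set.Ioo (0 : ℝ) 1,
          ENNReal.ofReal ((1 - s) ^ ((i : ℝ) * E) * s ^ (-β) * ρ s ^ (-γ)))
        = P * ∫⁻ u in Set.Ioo (0:ℝ) 1, f u := by
      rw [Finset.prod_range_succ]
    have hconst : ENNReal.ofReal K * ENNReal.ofReal c
        = ENNReal.ofReal (c ^ (((j : ℝ) + 1) * E)) := by
      rw [← ENNReal.ofReal_mul hK0]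
      congr 1
      rw [show ((j : ℝ) + 1) * E = ((j : ℝ) * E + γ - β) + 1 by rw [hE]; ring,
        Real.rpow_add hc, Real.rpow_one, hKdef]
    push_cast
    rw [hfin, ← hconst]
    ring

/-- Lemma 2.1: let `T, β, γ ∈ (0,∞)`, let `ρ : (0,1) → (0,∞)` be measurable, and let
`ϱ : [0,T]² → (0,∞)` satisfy `ϱ(t,s) = (T−t)⁻¹ ρ((s−t)/(T−t))` for `t ∈ [0,T)`, `s ∈ (t,T]`.
Then for all `j ∈ ℕ` (i.e. `1 ≤ j`) and `s₀ ∈ [0,T)` the iterated integral equals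
`(T−s₀)^{j(1+γ−β)} ∏_{i=0}^{j−1} ∫₀¹ (1−s)^{i(1+γ−β)} s^{−β} ρ(s)^{−γ} ds`
(as an identity in `[0,∞]`). -/
theorem stmt4 (T β γ : ℝ) (hT : 0 < T) (hβ : 0 < β) (hγ : 0 < γ)
    (ρ : ℝ → ℝ) (hρmeas : Measurable ρ) (hρpos : ∀ r ∈ Set.Ioo (0 : ℝ) 1, 0 < ρ r)
    (ϱ : ℝ → ℝ → ℝ)
    (hϱpos : ∀ t ∈ Set.Icc (0 : ℝ) T, ∀ s ∈ Set.Icc (0 : ℝ) T, 0 < ϱ t s)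
    (hϱ : ∀ t ∈ Set.Ico (0 : ℝ) T, ∀ s ∈ Set.Ioc t T,
      ϱ t s = (T - t)⁻¹ * ρ ((s - t) / (T - t)))
    (j : ℕ) (hj : 1 ≤ j) (s₀ : ℝ) (hs₀ : s₀ ∈ Set.Ico (0 : ℝ) T) :
    iterInt T β γ ϱ j s₀
      = ENNReal.ofReal ((T - s₀) ^ ((j : ℝ) * (1 + γ - β)))
        * ∏ i ∈ Finset.range j,
            ∫⁻ s in Set.Ioo (0 : ℝ) 1,
              ENNReal.ofReal ((1 - s) ^ ((i : ℝ) * (1 + γ - β)) * s ^ (-β) * ρ s ^ (-γ)) := by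
  exact main_ind T β γ hT hβ hγ ρ hρmeas hρpos ϱ hϱ j s₀ hs₀
end

section
/- For all j ∈ ℕ and s₀ ∈ [0,T) it holds that ∫_{s₀}^T (s₁−s₀)^{−β} ϱ(s₀,s₁)^{−γ} ∫_{s₁}^T (s₂−s₁)^{−β} ϱ(s₁,s₂)^{−γ} ⋯ ∫_{s_{j−1}}^T (s_j−s_{j−1})^{−β} ϱ(s_{j−1},s_j)^{−γ} ds_j ⋯ ds₂ ds₁ = [ (T−s₀)^{1+γ−β}·Γ(αγ−β+1)/(1−α)^γ ]^{j} · ∏_{i=0}^{j−1} Γ(i(1+γ−β)+1)/Γ(αγ−β+i(1+γ−β)+2), where Γ denotes the Gamma function. -/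
open MeasureTheory
open scoped ENNReal

lemma rbeta01_val {p q : ℝ} (hp : 0 < p) (hq : 0 < q) :
    ∫ x in (0:ℝ)..1, x ^ (p - 1) * (1 - x) ^ (q - 1)
      = Real.Gamma p * Real.Gamma q / Real.Gamma (p + q) := by
  have key : Complex.betaIntegral p q
      = ((∫ x in (0:ℝ)..1, x ^ (p - 1) * (1 - x) ^ (q - 1) : ℝ) : ℂ) := by
    rw [Complex.betaIntegral, ← intervalIntegral.integral_ofReal]
    refine intervalIntegral.integral_congr fun x hx => ?_
    rw [Set.uIcc_of_le (by norm_num : (0:ℝ) ≤ 1)] at hx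
    have hx0 : (0:ℝ) ≤ x := hx.1
    have hx1 : (0:ℝ) ≤ 1 - x := by linarith [hx.2]
    have e1 : ((x:ℂ)) ^ ((p:ℂ) - 1) = ((x ^ (p - 1) : ℝ) : ℂ) := by
      rw [Complex.ofReal_cpow hx0]; push_cast; ring_nf
    have e2 : ((1:ℂ) - (x:ℂ)) ^ ((q:ℂ) - 1) = (((1 - x) ^ (q - 1) : ℝ) : ℂ) := by
      rw [Complex.ofReal_cpow hx1]; push_cast; ring_nf
    rw [e1, e2]; push_cast; ring
  have h := Complex.Gamma_mul_Gamma_eq_betaIntegral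
    (s := (p:ℂ)) (t := (q:ℂ)) (by simpa using hp) (by simpa using hq)
  rw [key] at h
  have hGpq : Real.Gamma (p + q) ≠ 0 := (Real.Gamma_pos_of_pos (by linarith)).ne'
  have h2 : ((Real.Gamma p * Real.Gamma q : ℝ) : ℂ)
      = ((Real.Gamma (p + q) * ∫ x in (0:ℝ)..1, x ^ (p - 1) * (1 - x) ^ (q - 1) : ℝ) : ℂ) := by
    push_cast
    rw [← Complex.Gamma_ofReal, ← Complex.Gamma_ofReal, ← Complex.Gamma_ofReal]
    push_cast
    exact h
  have h3 := Complex.ofReal_injective h2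
  field_simp
  linarith [h3]

lemma rbeta01_int {p q : ℝ} (hp : 0 < p) (hq : 0 < q) :
    IntervalIntegrable (fun x : ℝ => x ^ (p - 1) * (1 - x) ^ (q - 1)) volume 0 1 := by
  have h := Complex.betaIntegral_convergent (u := (p:ℂ)) (v := (q:ℂ))
    (by simpa using hp) (by simpa using hq)
  rw [intervalIntegrable_iff_integrableOn_Ioc_of_le (by norm_num)] at h ⊢
  have h2 : IntegrableOn (fun x : ℝ =>
      ((x ^ (p - 1) * (1 - x) ^ (q - 1) : ℝ) : ℂ)) (Set.Ioc 0 1) volume := by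
    refine h.congr ?_
    filter_upwards [ae_restrict_mem measurableSet_Ioc] with x hx
    have hx0 : (0:ℝ) ≤ x := le_of_lt hx.1
    have hx1 : (0:ℝ) ≤ 1 - x := by linarith [hx.2]
    have e1 : ((x:ℂ)) ^ ((p:ℂ) - 1) = ((x ^ (p - 1) : ℝ) : ℂ) := by
      rw [Complex.ofReal_cpow hx0]; push_cast; ring_nf
    have e2 : ((1:ℂ) - (x:ℂ)) ^ ((q:ℂ) - 1) = (((1 - x) ^ (q - 1) : ℝ) : ℂ) := by
      rw [e1] at *
      rw [Complex.ofReal_cpow hx1]; push_cast; ring_nf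
    rw [e1, e2]; push_cast; ring
  have := h2.re
  refine this.congr (Filter.Eventually.of_forall fun x => ?_)
  simp

lemma rbeta_lintegral {a b p q : ℝ} (hab : a < b) (hp : 0 < p) (hq : 0 < q) :
    ∫⁻ s in Set.Ioo a b, ENNReal.ofReal ((s - a) ^ (p - 1) * (b - s) ^ (q - 1))
      = ENNReal.ofReal ((b - a) ^ (p + q - 1)
          * (Real.Gamma p * Real.Gamma q / Real.Gamma (p + q))) := by
  set c := b - a with hc
  have hc0 : 0 < c := by simp [hc, hab]
  set g : ℝ → ℝ := fun x => x ^ (p - 1) * (1 - x) ^ (q - 1) with hg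
  set f : ℝ → ℝ := fun s => (s - a) ^ (p - 1) * (b - s) ^ (q - 1) with hf
  -- pointwise identity on [a, b]
  have hpt : ∀ s, a ≤ s → s ≤ b → f s = c ^ (p + q - 2) * g ((s - a) * c⁻¹) := by
    intro s h1 h2
    have hsa : 0 ≤ s - a := by linarith
    have hbs : 0 ≤ b - s := by linarith
    have e2 : 1 - (s - a) * c⁻¹ = (b - s) * c⁻¹ := by
      field_simp
      rw [hc]; ring
    simp only [hg, hf]
    rw [e2, Real.mul_rpow hsa (inv_nonneg.2 hc0.le), Real.mul_rpow hbs (inv_nonneg.2 hc0.le),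
      Real.inv_rpow hc0.le, Real.inv_rpow hc0.le,
      show p + q - 2 = (p - 1) + (q - 1) by ring, Real.rpow_add hc0]
    have n1 : c ^ (p - 1) ≠ 0 := (Real.rpow_pos_of_pos hc0 _).ne'
    have n2 : c ^ (q - 1) ≠ 0 := (Real.rpow_pos_of_pos hc0 _).ne'
    field_simp
  -- integrability
  have hint : IntegrableOn f (Set.Ioo a b) volume := by
    have h1 := ((rbeta01_int hp hq).comp_mul_right (c := c⁻¹)).comp_add_right (-a)
    have h2 : IntervalIntegrable (fun s => g ((s + -a) * c⁻¹)) volume a b := by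
      have e0 : (0:ℝ) / c⁻¹ - -a = a := by simp
      have e1 : (1:ℝ) / c⁻¹ - -a = b := by rw [one_div, inv_inv, hc]; ring
      rwa [e0, e1] at h1
    have h3 := (h2.const_mul (c ^ (p + q - 2))).1
    have h4 : IntegrableOn f (Set.Ioc a b) volume := by
      refine h3.congr ?_
      filter_upwards [ae_restrict_mem measurableSet_Ioc] with s hs
      rw [show s + -a = s - a by ring]
      exact (hpt s hs.1.le hs.2).symm
    exact h4.mono_set Set.Ioo_subset_Ioc_self
  -- value of the real integral
  have hval : ∫ s in Set.Ioo a b, f s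
      = c ^ (p + q - 1) * (Real.Gamma p * Real.Gamma q / Real.Gamma (p + q)) := by
    rw [← integral_Ioc_eq_integral_Ioo, ← intervalIntegral.integral_of_le hab.le]
    have hsub := intervalIntegral.smul_integral_comp_mul_add (a := 0) (b := 1) f c a
    rw [mul_zero, zero_add, mul_one] at hsub
    rw [show c + a = b by rw [hc]; ring] at hsub
    rw [← hsub]
    have : ∫ x in (0:ℝ)..1, f (c * x + a) = ∫ x in (0:ℝ)..1, c ^ (p + q - 2) * g x := by
      refine intervalIntegral.integral_congr fun x hx => ?_
      rw [Set.uIcc_of_le (by norm_num : (0:ℝ) ≤ 1)] at hx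
      have h1 : a ≤ c * x + a := by nlinarith [hx.1, hc0.le]
      have h2 : c * x + a ≤ b := by nlinarith [hx.2, hc0.le]
      rw [hpt _ h1 h2]
      congr 2
      field_simp
      ring
    rw [this, intervalIntegral.integral_const_mul, rbeta01_val hp hq, smul_eq_mul,
      show p + q - 1 = 1 + (p + q - 2) by ring, Real.rpow_add hc0, Real.rpow_one]
    ring
  -- convert to lower integral
  rw [← hval, ← ofReal_integral_eq_lintegral_ofReal hint ?_]
  · filter_upwards [ae_restrict_mem measurableSet_Ioo] with s hs
    exact mul_nonneg (Real.rpow_nonneg (by linarith [hs.1]) _)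
      (Real.rpow_nonneg (by linarith [hs.2]) _)

lemma stmt5_aux (α T γ β : ℝ) (hα : α ∈ Set.Ioo (0 : ℝ) 1) (hT : 0 < T) (hγ : 0 < γ)
    (hβ : β ∈ Set.Ioo (0 : ℝ) (α * γ + 1))
    (ρ : ℝ → ℝ) (hρ : ∀ r ∈ Set.Ioo (0 : ℝ) 1, ρ r = (1 - α) / r ^ α)
    (ϱ : ℝ → ℝ → ℝ)
    (hϱ : ∀ t ∈ Set.Ico (0 : ℝ) T, ∀ s ∈ Set.Ioc t T,
      ϱ t s = (T - t)⁻¹ * ρ ((s - t) / (T - t)))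
    (j : ℕ) : ∀ s₀ ∈ Set.Ico (0 : ℝ) T,
    iterInt T β γ ϱ j s₀
      = ENNReal.ofReal
          (((T - s₀) ^ (1 + γ - β) * Real.Gamma (α * γ - β + 1) / (1 - α) ^ γ) ^ j
            * ∏ i ∈ Finset.range j,
                Real.Gamma ((i : ℝ) * (1 + γ - β) + 1)
                  / Real.Gamma (α * γ - β + (i : ℝ) * (1 + γ - β) + 2)) := by
  obtain ⟨hα0, hα1⟩ := hα
  obtain ⟨hβ0, hβ1⟩ := hβ
  have h1α : 0 < 1 - α := by linarith
  have hp : 0 < α * γ - β + 1 := by linarith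
  have he : 0 < 1 + γ - β := by nlinarith
  have hZ : (0:ℝ) < (1 - α) ^ γ := Real.rpow_pos_of_pos h1α γ
  induction j with
  | zero => intro s₀ _; simp [iterInt]
  | succ j ih =>
    intro s₀ hs₀
    obtain ⟨hs₀0, hs₀T⟩ := hs₀
    have hv : (0:ℝ) < T - s₀ := by linarith
    have hq : (0:ℝ) < (j:ℝ) * (1 + γ - β) + 1 := by positivity
    set Pj : ℝ := ∏ i ∈ Finset.range j,
      Real.Gamma ((i : ℝ) * (1 + γ - β) + 1)
        / Real.Gamma (α * γ - β + (i : ℝ) * (1 + γ - β) + 2) with hPj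
    have hPj0 : 0 ≤ Pj := by
      refine Finset.prod_nonneg fun i _ => ?_
      have h1 : (0:ℝ) < (i:ℝ) * (1 + γ - β) + 1 := by positivity
      have h2 : (0:ℝ) < α * γ - β + (i:ℝ) * (1 + γ - β) + 2 := by
        have : (0:ℝ) ≤ (i:ℝ) * (1 + γ - β) := by positivity
        linarith
      exact (div_pos (Real.Gamma_pos_of_pos h1) (Real.Gamma_pos_of_pos h2)).le
    set D : ℝ := (1 - α) ^ (-γ) * (T - s₀) ^ (γ - α * γ)
      * ((Real.Gamma (α * γ - β + 1) / (1 - α) ^ γ) ^ j * Pj) with hD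
    have hD0 : 0 ≤ D := by
      refine mul_nonneg (mul_nonneg (Real.rpow_nonneg h1α.le _) (Real.rpow_nonneg hv.le _))
        (mul_nonneg (pow_nonneg (div_nonneg (Real.Gamma_pos_of_pos hp).le hZ.le) _) hPj0)
    have hpt : ∀ s ∈ Set.Ioo s₀ T,
        ENNReal.ofReal ((s - s₀) ^ (-β) * ϱ s₀ s ^ (-γ)) * iterInt T β γ ϱ j s
          = ENNReal.ofReal (D * ((s - s₀) ^ (α * γ - β + 1 - 1)
              * (T - s) ^ ((j:ℝ) * (1 + γ - β) + 1 - 1))) := by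
      intro s hs
      have hu : (0:ℝ) < s - s₀ := by linarith [hs.1]
      have hw : (0:ℝ) ≤ T - s := by linarith [hs.2]
      have hϱs : ϱ s₀ s = (T - s₀)⁻¹ * ρ ((s - s₀) / (T - s₀)) :=
        hϱ s₀ ⟨hs₀0, hs₀T⟩ s ⟨hs.1, hs.2.le⟩
      have hr : (s - s₀) / (T - s₀) ∈ Set.Ioo (0:ℝ) 1 :=
        ⟨div_pos hu hv, (div_lt_one hv).2 (by linarith [hs.2])⟩
      have huα : (0:ℝ) < (s - s₀) ^ α := Real.rpow_pos_of_pos hu α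
      have hvα : (0:ℝ) < (T - s₀) ^ α := Real.rpow_pos_of_pos hv α
      have h2 : ϱ s₀ s = (1 - α) * ((s - s₀) ^ (-α) * (T - s₀) ^ (α - 1)) := by
        rw [hϱs, hρ _ hr, Real.div_rpow hu.le hv.le, Real.rpow_neg hu.le,
          Real.rpow_sub hv, Real.rpow_one]
        field_simp
      have hϱpow : ϱ s₀ s ^ (-γ)
          = (1 - α) ^ (-γ) * ((s - s₀) ^ (α * γ) * (T - s₀) ^ (γ - α * γ)) := by
        rw [h2, Real.mul_rpow h1α.le
            (mul_nonneg (Real.rpow_nonneg hu.le _) (Real.rpow_nonneg hv.le _)),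
          Real.mul_rpow (Real.rpow_nonneg hu.le _) (Real.rpow_nonneg hv.le _),
          ← Real.rpow_mul hu.le, ← Real.rpow_mul hv.le,
          show -α * -γ = α * γ by ring, show (α - 1) * -γ = γ - α * γ by ring]
      have hIH := ih s ⟨by linarith [hs.1], hs.2⟩
      rw [hIH, ← ENNReal.ofReal_mul (by
        rw [hϱpow]
        exact mul_nonneg (Real.rpow_nonneg hu.le _)
          (mul_nonneg (Real.rpow_nonneg h1α.le _)
            (mul_nonneg (Real.rpow_nonneg hu.le _) (Real.rpow_nonneg hv.le _))))]
      congr 1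
      have Eu : (s - s₀) ^ (α * γ - β + 1 - 1) = (s - s₀) ^ (-β) * (s - s₀) ^ (α * γ) := by
        rw [← Real.rpow_add hu]; congr 1; ring
      have Ew : (T - s) ^ ((j:ℝ) * (1 + γ - β) + 1 - 1) = ((T - s) ^ (1 + γ - β)) ^ j := by
        rw [← Real.rpow_natCast ((T - s) ^ (1 + γ - β)) j, ← Real.rpow_mul hw]
        congr 1; push_cast; ring
      rw [hϱpow, Eu, Ew, hD]
      ring
    have step1 : iterInt T β γ ϱ (j + 1) s₀
        = ∫⁻ s in Set.Ioo s₀ T, ENNReal.ofReal (D * ((s - s₀) ^ (α * γ - β + 1 - 1)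
            * (T - s) ^ ((j:ℝ) * (1 + γ - β) + 1 - 1))) := by
      rw [iterInt]
      exact setLIntegral_congr_fun measurableSet_Ioo hpt
    have step2 : ∫⁻ s in Set.Ioo s₀ T, ENNReal.ofReal (D * ((s - s₀) ^ (α * γ - β + 1 - 1)
            * (T - s) ^ ((j:ℝ) * (1 + γ - β) + 1 - 1)))
        = ENNReal.ofReal D * ∫⁻ s in Set.Ioo s₀ T,
            ENNReal.ofReal ((s - s₀) ^ (α * γ - β + 1 - 1)
              * (T - s) ^ ((j:ℝ) * (1 + γ - β) + 1 - 1)) := by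
      rw [← lintegral_const_mul' _ _ ENNReal.ofReal_ne_top]
      refine lintegral_congr fun s => ?_
      rw [← ENNReal.ofReal_mul hD0]
    rw [step1, step2, rbeta_lintegral hs₀T hp hq, ← ENNReal.ofReal_mul hD0]
    congr 1
    -- final real algebra
    have key : (T - s₀) ^ (γ - α * γ)
          * (T - s₀) ^ (α * γ - β + 1 + ((j:ℝ) * (1 + γ - β) + 1) - 1)
        = ((T - s₀) ^ (1 + γ - β)) ^ (j + 1) := by
      rw [← Real.rpow_add hv, ← Real.rpow_natCast ((T - s₀) ^ (1 + γ - β)) (j + 1),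
        ← Real.rpow_mul hv.le]
      congr 1; push_cast; ring
    have hGcongr : Real.Gamma (α * γ - β + 1 + ((j:ℝ) * (1 + γ - β) + 1))
        = Real.Gamma (α * γ - β + (j:ℝ) * (1 + γ - β) + 2) := by
      congr 1; ring
    have hGpq : (0:ℝ) < Real.Gamma (α * γ - β + (j:ℝ) * (1 + γ - β) + 2) := by
      refine Real.Gamma_pos_of_pos ?_
      have : (0:ℝ) ≤ (j:ℝ) * (1 + γ - β) := by positivity
      linarith
    rw [Finset.prod_range_succ, ← hPj, hD]
    calc (1 - α) ^ (-γ) * (T - s₀) ^ (γ - α * γ)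
          * ((Real.Gamma (α * γ - β + 1) / (1 - α) ^ γ) ^ j * Pj)
          * ((T - s₀) ^ (α * γ - β + 1 + ((j:ℝ) * (1 + γ - β) + 1) - 1)
            * (Real.Gamma (α * γ - β + 1) * Real.Gamma ((j:ℝ) * (1 + γ - β) + 1)
              / Real.Gamma (α * γ - β + 1 + ((j:ℝ) * (1 + γ - β) + 1))))
        = ((T - s₀) ^ (γ - α * γ)
            * (T - s₀) ^ (α * γ - β + 1 + ((j:ℝ) * (1 + γ - β) + 1) - 1))
          * ((1 - α) ^ (-γ) * Real.Gamma (α * γ - β + 1)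
            * (Real.Gamma (α * γ - β + 1) / (1 - α) ^ γ) ^ j * Pj
            * Real.Gamma ((j:ℝ) * (1 + γ - β) + 1)
            / Real.Gamma (α * γ - β + 1 + ((j:ℝ) * (1 + γ - β) + 1))) := by ring
      _ = ((T - s₀) ^ (1 + γ - β)) ^ (j + 1)
          * (((1 - α) ^ γ)⁻¹ * Real.Gamma (α * γ - β + 1)
            * (Real.Gamma (α * γ - β + 1) / (1 - α) ^ γ) ^ j * Pj
            * Real.Gamma ((j:ℝ) * (1 + γ - β) + 1)
            / Real.Gamma (α * γ - β + (j:ℝ) * (1 + γ - β) + 2)) := by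
          rw [key, hGcongr, Real.rpow_neg h1α.le]
      _ = ((T - s₀) ^ (1 + γ - β) * Real.Gamma (α * γ - β + 1) / (1 - α) ^ γ) ^ (j + 1)
          * (Pj * (Real.Gamma ((j:ℝ) * (1 + γ - β) + 1)
            / Real.Gamma (α * γ - β + (j:ℝ) * (1 + γ - β) + 2))) := by
          ring

/-- Lemma 2.2: let `α ∈ (0,1)`, `T, γ ∈ (0,∞)`, `β ∈ (0, αγ+1)`, let `ρ(r) = (1−α) r^{−α}` and
`ϱ(t,s) = (T−t)⁻¹ ρ((s−t)/(T−t))`.  Then for all `j ∈ ℕ` (i.e. `1 ≤ j`) and `s₀ ∈ [0,T)` the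
iterated integral equals
`[(T−s₀)^{1+γ−β} Γ(αγ−β+1)/(1−α)^γ]^j ∏_{i=0}^{j−1} Γ(i(1+γ−β)+1)/Γ(αγ−β+i(1+γ−β)+2)`. -/
theorem stmt5 (α T γ β : ℝ) (hα : α ∈ Set.Ioo (0 : ℝ) 1) (hT : 0 < T) (hγ : 0 < γ)
    (hβ : β ∈ Set.Ioo (0 : ℝ) (α * γ + 1))
    (ρ : ℝ → ℝ) (hρ : ∀ r ∈ Set.Ioo (0 : ℝ) 1, ρ r = (1 - α) / r ^ α)
    (ϱ : ℝ → ℝ → ℝ)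
    (hϱ : ∀ t ∈ Set.Ico (0 : ℝ) T, ∀ s ∈ Set.Ioc t T,
      ϱ t s = (T - t)⁻¹ * ρ ((s - t) / (T - t)))
    (j : ℕ) (hj : 1 ≤ j) (s₀ : ℝ) (hs₀ : s₀ ∈ Set.Ico (0 : ℝ) T) :
    iterInt T β γ ϱ j s₀
      = ENNReal.ofReal
          (((T - s₀) ^ (1 + γ - β) * Real.Gamma (α * γ - β + 1) / (1 - α) ^ γ) ^ j
            * ∏ i ∈ Finset.range j,
                Real.Gamma ((i : ℝ) * (1 + γ - β) + 1)
                  / Real.Gamma (α * γ - β + (i : ℝ) * (1 + γ - β) + 2)) :=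
  stmt5_aux α T γ β hα hT hγ hβ ρ hρ ϱ hϱ j s₀ hs₀
end

section
/- For all j ∈ ℕ it holds that ∏_{i=0}^{j−1} Γ(i(1+γ−β)+1)/Γ(αγ−β+i(1+γ−β)+2) ≤ [ e^{1+γ−β}·((1+γ−β)(j−1)+1) ]^{(β−αγ)(αγ−β+1)/(1+γ−β)} · [ Γ(1/(1+γ−β)) / ((1+γ−β)^{j}·Γ(j + 1/(1+γ−β))) ]^{αγ−β+1}, where Γ denotes the Gamma function. -/
open Real Finset

lemma wendel {x d : ℝ} (hx : 0 < x) (hd0 : 0 ≤ d) (hd1 : d ≤ 1) :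
    Real.Gamma x / Real.Gamma (x + d) ≤ (x + d) ^ (1 - d) / x := by
  have hxd : 0 < x + d := by linarith
  have hgx : 0 < Real.Gamma x := Real.Gamma_pos_of_pos hx
  have hgxd : 0 < Real.Gamma (x + d) := Real.Gamma_pos_of_pos hxd
  have hconv := Real.convexOn_log_Gamma.2 (Set.mem_Ioi.2 hxd)
      (Set.mem_Ioi.2 (by linarith : (0:ℝ) < x + 1 + d)) hd0 (by linarith : (0:ℝ) ≤ 1 - d)
      (by ring)
  have hpt : d • (x + d) + (1 - d) • (x + 1 + d) = x + 1 := by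
    simp only [smul_eq_mul]; ring
  rw [hpt] at hconv
  simp only [Function.comp_apply, smul_eq_mul] at hconv
  have h1 : Real.Gamma (x + 1 + d) = (x + d) * Real.Gamma (x + d) := by
    have := Real.Gamma_add_one (ne_of_gt hxd)
    rw [show x + 1 + d = (x + d) + 1 by ring, this]
  have h2 : Real.Gamma (x + 1) = x * Real.Gamma x := by
    rw [Real.Gamma_add_one (ne_of_gt hx)]
  rw [h1, h2, Real.log_mul (ne_of_gt hxd) (ne_of_gt hgxd),
    Real.log_mul (ne_of_gt hx) (ne_of_gt hgx)] at hconv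
  have key : Real.log x + Real.log (Real.Gamma x)
      ≤ (1 - d) * Real.log (x + d) + Real.log (Real.Gamma (x + d)) := by nlinarith [hconv]
  have := Real.exp_le_exp.2 key
  rw [Real.exp_add, Real.exp_add, Real.exp_log hx, Real.exp_log hgx,
    Real.exp_log hgxd, mul_comm (1 - d), ← Real.rpow_def_of_pos hxd] at this
  rw [div_le_div_iff₀ hgxd hx]
  nlinarith [this, hgxd.le, hxd.le]

lemma gamprod {c : ℝ} (hc : 0 < c) (j : ℕ) :
    c ^ j * Real.Gamma ((j : ℝ) + 1 / c) =
      Real.Gamma (1 / c) * ∏ i ∈ Finset.range j, ((i : ℝ) * c + 1) := by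
  induction j with
  | zero => simp
  | succ n ih =>
    have hpos : (0 : ℝ) < (n : ℝ) + 1 / c := by positivity
    have h1 : ((n + 1 : ℕ) : ℝ) + 1 / c = ((n : ℝ) + 1 / c) + 1 := by push_cast; ring
    rw [h1, Real.Gamma_add_one hpos.ne', Finset.prod_range_succ, pow_succ]
    have hcc : c * ((n : ℝ) + 1 / c) = (n : ℝ) * c + 1 := by field_simp
    calc c ^ n * c * (((n : ℝ) + 1 / c) * Real.Gamma ((n : ℝ) + 1 / c))
        = (c * ((n : ℝ) + 1 / c)) * (c ^ n * Real.Gamma ((n : ℝ) + 1 / c)) := by ring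
      _ = ((n : ℝ) * c + 1) * (Real.Gamma (1 / c) * ∏ i ∈ Finset.range n, ((i : ℝ) * c + 1)) := by
          rw [hcc, ih]
      _ = Real.Gamma (1 / c) * ((∏ i ∈ Finset.range n, ((i : ℝ) * c + 1)) * ((n : ℝ) * c + 1)) := by
          ring

lemma harm {c : ℝ} (hc : 0 < c) (j : ℕ) (hj : 1 ≤ j) :
    ∑ i ∈ Finset.range j, 1 / ((i : ℝ) * c + 1) ≤ 1 + Real.log (c * ((j : ℝ) - 1) + 1) / c := by
  induction j, hj using Nat.le_induction with
  | base => simp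
  | succ n hn ih =>
    rw [Finset.sum_range_succ]
    have hn1 : (1 : ℝ) ≤ (n : ℝ) := by exact_mod_cast hn
    have hb : (0 : ℝ) < c * ((n : ℝ) - 1) + 1 := by nlinarith
    have ha : (0 : ℝ) < c * (n : ℝ) + 1 := by nlinarith
    have h := Real.log_le_sub_one_of_pos (div_pos hb ha)
    rw [Real.log_div hb.ne' ha.ne'] at h
    have e : (c * ((n : ℝ) - 1) + 1) / (c * (n : ℝ) + 1) - 1 = -(c / (c * (n : ℝ) + 1)) := by
      field_simp; ring
    rw [e] at h
    have key : 1 / ((n : ℝ) * c + 1) ≤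
        Real.log (c * (n : ℝ) + 1) / c - Real.log (c * ((n : ℝ) - 1) + 1) / c := by
      rw [← sub_div, le_div_iff₀ hc]
      have e2 : 1 / ((n : ℝ) * c + 1) * c = c / (c * (n : ℝ) + 1) := by
        field_simp
      rw [e2]
      linarith
    push_cast
    rw [show c * ((n : ℝ) + 1 - 1) + 1 = c * (n : ℝ) + 1 by ring]
    linarith [ih, key]

/-- Let `α ∈ (0,1)`, `γ ∈ (0,∞)`, `β ∈ [αγ, αγ+1]`.  Then for all `j ∈ ℕ` (i.e. `1 ≤ j`),
`∏_{i=0}^{j−1} Γ(i(1+γ−β)+1)/Γ(αγ−β+i(1+γ−β)+2)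
  ≤ [e^{1+γ−β}((1+γ−β)(j−1)+1)]^{(β−αγ)(αγ−β+1)/(1+γ−β)}
    · [Γ(1/(1+γ−β))/((1+γ−β)^j Γ(j+1/(1+γ−β)))]^{αγ−β+1}`. -/
theorem stmt8 (α γ β : ℝ) (hα : α ∈ Set.Ioo (0 : ℝ) 1) (hγ : 0 < γ)
    (hβ : β ∈ Set.Icc (α * γ) (α * γ + 1)) (j : ℕ) (hj : 1 ≤ j) :
    ∏ i ∈ Finset.range j,
        Real.Gamma ((i : ℝ) * (1 + γ - β) + 1) / Real.Gamma (α * γ - β + (i : ℝ) * (1 + γ - β) + 2)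
      ≤ (Real.exp (1 + γ - β) * ((1 + γ - β) * ((j : ℝ) - 1) + 1))
            ^ ((β - α * γ) * (α * γ - β + 1) / (1 + γ - β))
        * (Real.Gamma (1 / (1 + γ - β))
            / ((1 + γ - β) ^ j * Real.Gamma ((j : ℝ) + 1 / (1 + γ - β))))
            ^ (α * γ - β + 1) := by
  obtain ⟨hα0, hα1⟩ := hα
  obtain ⟨hβ1, hβ2⟩ := hβ
  set c : ℝ := 1 + γ - β with hcdef
  set d : ℝ := α * γ - β + 1 with hddef
  have hc : 0 < c := by
    have : α * γ < γ := by nlinarith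
    rw [hcdef]; linarith
  have hd0 : 0 ≤ d := by rw [hddef]; linarith
  have hd1 : d ≤ 1 := by rw [hddef]; linarith
  have hβαγ : β - α * γ = 1 - d := by rw [hddef]; ring
  have hj1 : (1 : ℝ) ≤ (j : ℝ) := by exact_mod_cast hj
  have hx : ∀ i : ℕ, (0 : ℝ) < (i : ℝ) * c + 1 := fun i => by positivity
  have hden : ∀ i : ℕ, α * γ - β + (i : ℝ) * c + 2 = ((i : ℝ) * c + 1) + d := by
    intro i; rw [hddef]; ring
  set P : ℝ := ∏ i ∈ Finset.range j, ((i : ℝ) * c + 1) with hP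
  have hPpos : 0 < P := Finset.prod_pos fun i _ => hx i
  have hcj : (0 : ℝ) < c * ((j : ℝ) - 1) + 1 := by nlinarith
  set A : ℝ := Real.exp c * (c * ((j : ℝ) - 1) + 1) with hA
  have hApos : 0 < A := by rw [hA]; positivity
  -- second RHS factor
  have hB : Real.Gamma (1 / c) / (c ^ j * Real.Gamma ((j : ℝ) + 1 / c)) = P⁻¹ := by
    rw [gamprod hc j, ← hP]
    have hg : 0 < Real.Gamma (1 / c) := Real.Gamma_pos_of_pos (by positivity)
    field_simp
  -- Step 1: Wendel bound on each factor
  have step1 : ∏ i ∈ Finset.range j,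
        Real.Gamma ((i : ℝ) * c + 1) / Real.Gamma (α * γ - β + (i : ℝ) * c + 2)
      ≤ ∏ i ∈ Finset.range j, (((i : ℝ) * c + 1 + d) ^ (1 - d) / ((i : ℝ) * c + 1)) := by
    apply Finset.prod_le_prod
    · intro i _
      rw [hden i]
      exact div_nonneg (Real.Gamma_pos_of_pos (hx i)).le
        (Real.Gamma_pos_of_pos (by linarith [hx i])).le
    · intro i _
      rw [hden i]
      exact wendel (hx i) hd0 hd1
  -- Step 2: split each factor
  have step2 : ∏ i ∈ Finset.range j, (((i : ℝ) * c + 1 + d) ^ (1 - d) / ((i : ℝ) * c + 1))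
      = (∏ i ∈ Finset.range j, (((i : ℝ) * c + 1 + d) / ((i : ℝ) * c + 1))) ^ (1 - d)
        * P ^ (-d) := by
    have hterm : ∀ i ∈ Finset.range j,
        ((i : ℝ) * c + 1 + d) ^ (1 - d) / ((i : ℝ) * c + 1)
          = (((i : ℝ) * c + 1 + d) / ((i : ℝ) * c + 1)) ^ (1 - d) * ((i : ℝ) * c + 1) ^ (-d) := by
      intro i _
      have hxi := hx i
      have hy : (0 : ℝ) < (i : ℝ) * c + 1 + d := by linarith
      have hxsplit : ((i : ℝ) * c + 1) ^ (1 - d) * ((i : ℝ) * c + 1) ^ d = (i : ℝ) * c + 1 := by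
        rw [← Real.rpow_add hxi, sub_add_cancel, Real.rpow_one]
      calc ((i : ℝ) * c + 1 + d) ^ (1 - d) / ((i : ℝ) * c + 1)
          = ((i : ℝ) * c + 1 + d) ^ (1 - d)
              / (((i : ℝ) * c + 1) ^ (1 - d) * ((i : ℝ) * c + 1) ^ d) := by rw [hxsplit]
        _ = ((i : ℝ) * c + 1 + d) ^ (1 - d) / ((i : ℝ) * c + 1) ^ (1 - d)
              * (((i : ℝ) * c + 1) ^ d)⁻¹ := by ring
        _ = (((i : ℝ) * c + 1 + d) / ((i : ℝ) * c + 1)) ^ (1 - d)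
              * ((i : ℝ) * c + 1) ^ (-d) := by
            rw [← Real.div_rpow hy.le hxi.le, Real.rpow_neg hxi.le]
    rw [Finset.prod_congr rfl hterm, Finset.prod_mul_distrib,
      ← Real.finset_prod_rpow _ _ (fun i _ => by positivity) (1 - d),
      ← Real.finset_prod_rpow _ _ (fun i _ => (hx i).le) (-d)]
  -- Step 4: ratio product bound
  have step4 : ∏ i ∈ Finset.range j, (((i : ℝ) * c + 1 + d) / ((i : ℝ) * c + 1))
      ≤ A ^ (d / c) := by
    have hAd : A ^ (d / c)
        = Real.exp (d + Real.log (c * ((j : ℝ) - 1) + 1) * (d / c)) := by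
      rw [Real.rpow_def_of_pos hApos, hA, Real.log_mul (Real.exp_ne_zero c) hcj.ne',
        Real.log_exp]
      congr 1
      field_simp
    have hterm : ∀ i ∈ Finset.range j,
        ((i : ℝ) * c + 1 + d) / ((i : ℝ) * c + 1) = d * (1 / ((i : ℝ) * c + 1)) + 1 := by
      intro i _
      field_simp
      ring
    rw [Finset.prod_congr rfl hterm, hAd]
    calc ∏ i ∈ Finset.range j, (d * (1 / ((i : ℝ) * c + 1)) + 1)
        ≤ ∏ i ∈ Finset.range j, Real.exp (d * (1 / ((i : ℝ) * c + 1))) := by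
          apply Finset.prod_le_prod
          · intro i _; positivity
          · intro i _; exact Real.add_one_le_exp _
      _ = Real.exp (∑ i ∈ Finset.range j, d * (1 / ((i : ℝ) * c + 1))) :=
          (Real.exp_sum _ _).symm
      _ ≤ Real.exp (d + Real.log (c * ((j : ℝ) - 1) + 1) * (d / c)) := by
          rw [Real.exp_le_exp, ← Finset.mul_sum]
          have hs := harm hc j hj
          calc d * ∑ i ∈ Finset.range j, 1 / ((i : ℝ) * c + 1)
              ≤ d * (1 + Real.log (c * ((j : ℝ) - 1) + 1) / c) :=
                mul_le_mul_of_nonneg_left hs hd0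
            _ = d + Real.log (c * ((j : ℝ) - 1) + 1) * (d / c) := by
                field_simp
  -- assemble
  rw [hβαγ, hB]
  have hrpowP : (P⁻¹) ^ d = P ^ (-d) := by
    rw [Real.rpow_neg hPpos.le, ← Real.inv_rpow hPpos.le]
  rw [hrpowP, show (1 - d) * d / c = d / c * (1 - d) by ring,
    Real.rpow_mul hApos.le]
  have hPd : (0 : ℝ) ≤ P ^ (-d) := Real.rpow_nonneg hPpos.le _
  calc ∏ i ∈ Finset.range j,
        Real.Gamma ((i : ℝ) * c + 1) / Real.Gamma (α * γ - β + (i : ℝ) * c + 2)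
      ≤ ∏ i ∈ Finset.range j, (((i : ℝ) * c + 1 + d) ^ (1 - d) / ((i : ℝ) * c + 1)) := step1
    _ = (∏ i ∈ Finset.range j, (((i : ℝ) * c + 1 + d) / ((i : ℝ) * c + 1))) ^ (1 - d)
        * P ^ (-d) := step2
    _ ≤ (A ^ (d / c)) ^ (1 - d) * P ^ (-d) := by
        apply mul_le_mul_of_nonneg_right _ hPd
        exact Real.rpow_le_rpow (Finset.prod_nonneg fun i _ => by positivity) step4
          (by linarith)
end

section
/- The following two assertions hold: (a) for all t ∈ [0,T] and x = (x_1,…,x_d), 𝔵 = (𝔵_1,…,𝔵_d) ∈ ℝ^d: |u(t,x) − u(t,𝔵)| ≤ e^{L₀(T−t)} · Σ_{j=1}^{d} (K_j + (T−t)·𝔏_j)·|x_j − 𝔵_j|; and (b) for all t ∈ (0,T), x ∈ ℝ^d, i ∈ {1,…,d}: |(∂/∂x_i)u(t,x)| ≤ e^{L₀(T−t)}·(K_i + (T−t)·𝔏_i). -/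
open MeasureTheory

/-- Partial derivative of `φ : ℝ^d → ℝ` at `x` in the `i`-th coordinate direction. -/
noncomputable def pderiv (d : ℕ) (φ : (Fin d → ℝ) → ℝ) (x : Fin d → ℝ) (i : Fin d) : ℝ :=
  fderiv ℝ φ x (Pi.single i 1)

/-- Laplacian of `φ : ℝ^d → ℝ` at `x` (sum of the second coordinate partial derivatives). -/
noncomputable def laplacian (d : ℕ) (φ : (Fin d → ℝ) → ℝ) (x : Fin d → ℝ) : ℝ :=
  ∑ i : Fin d, pderiv d (fun y => pderiv d φ y i) x i

section AuxLemmas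

open Set

/-- Derivative along a coordinate line. -/
lemma line_hasDerivAt {d : ℕ} (F : (Fin d → ℝ) → ℝ) (x v : Fin d → ℝ) (τ₀ : ℝ)
    (hF : DifferentiableAt ℝ F (x + τ₀ • v)) :
    HasDerivAt (fun τ : ℝ => F (x + τ • v)) (fderiv ℝ F (x + τ₀ • v) v) τ₀ := by
  have hγ : HasDerivAt (fun τ : ℝ => x + τ • v) v τ₀ := by
    simpa using ((hasDerivAt_id τ₀).smul_const v).const_add x
  exact hF.hasFDerivAt.comp_hasDerivAt τ₀ hγ

/-- One-sided maximum principle for derivatives within an interval. -/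
lemma deriv_nonpos_of_isMaxOn {ψ : ℝ → ℝ} {D a b t : ℝ} (hta : a ≤ t) (htb : t < b)
    (hD : HasDerivWithinAt ψ D (Icc a b) t) (hmax : ∀ s ∈ Icc t b, ψ s ≤ ψ t) : D ≤ 0 := by
  have hsub : Icc t b ⊆ Icc a b := Icc_subset_Icc hta le_rfl
  have hD' : HasDerivWithinAt ψ D (Icc t b) t := hD.mono hsub
  have hslope := hasDerivWithinAt_iff_tendsto_slope.1 hD'
  have hset : Icc t b \ {t} = Ioc t b := by
    ext s; simp only [mem_diff, mem_Icc, mem_singleton_iff, mem_Ioc]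
    constructor
    · rintro ⟨⟨h1, h2⟩, h3⟩; exact ⟨lt_of_le_of_ne h1 (Ne.symm h3), h2⟩
    · rintro ⟨h1, h2⟩; exact ⟨⟨h1.le, h2⟩, h1.ne'⟩
  rw [hset] at hslope
  haveI : (nhdsWithin t (Ioc t b)).NeBot := by
    rw [nhdsWithin_Ioc_eq_nhdsGT htb]; infer_instance
  refine le_of_tendsto hslope ?_
  filter_upwards [self_mem_nhdsWithin] with s hs
  have hst : t < s := hs.1
  have h1 : ψ s - ψ t ≤ 0 := sub_nonpos.2 (hmax s (mem_Icc.mpr ⟨hst.le, hs.2⟩))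
  have h2 : slope ψ t s = (ψ s - ψ t) / (s - t) := by rw [slope_def_field]
  rw [h2]
  exact div_nonpos_of_nonpos_of_nonneg h1 (by linarith)

/-- Second derivative test at a global max. -/
lemma secondDeriv_nonpos_of_max {ψ D : ℝ → ℝ} {c : ℝ}
    (hall : ∀ τ, HasDerivAt ψ (D τ) τ) (h2 : HasDerivAt D c 0)
    (hmax : ∀ τ, ψ τ ≤ ψ 0) : D 0 = 0 ∧ c ≤ 0 := by
  have hloc : IsLocalMax ψ 0 := Filter.Eventually.of_forall hmax
  have hD0 : D 0 = 0 := hloc.hasDerivAt_eq_zero (hall 0)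
  refine ⟨hD0, ?_⟩
  by_contra hc
  push_neg at hc
  have hslope := hasDerivAt_iff_tendsto_slope.1 h2
  have h2' : Filter.Tendsto (fun τ => D τ / τ) (nhdsWithin 0 (Ioi 0)) (nhds c) := by
    have := hslope.mono_left (nhdsWithin_mono 0 (by intro s hs; simpa using (ne_of_gt hs)))
    refine this.congr (fun τ => ?_)
    rw [slope_def_field, hD0]; ring
  have hev : ∀ᶠ τ in nhdsWithin 0 (Ioi 0), c / 2 < D τ / τ :=
    h2'.eventually (eventually_gt_nhds (by linarith))
  obtain ⟨δ, hδ, hInt⟩ := (nhdsGT_basis (0:ℝ)).eventually_iff.mp hev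
  set τ₁ := δ / 2 with hτ₁
  have hτ₁pos : 0 < τ₁ := by positivity
  have hcont : ContinuousOn ψ (Icc 0 τ₁) := fun s _ => (hall s).continuousAt.continuousWithinAt
  obtain ⟨ξ, hξ, hDξ⟩ := exists_hasDerivAt_eq_slope ψ D hτ₁pos hcont (fun s _ => hall s)
  have hξmem : ξ ∈ Ioo (0:ℝ) δ := ⟨hξ.1, by have := hξ.2; simp only [hτ₁] at this ⊢; linarith⟩
  have hDgt : c / 2 < D ξ / ξ := hInt hξmem
  have hξpos : 0 < ξ := hξ.1
  have hDpos : 0 < D ξ := by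
    have := (lt_div_iff₀ hξpos).mp hDgt
    nlinarith
  have hq : 0 < (ψ τ₁ - ψ 0) / (τ₁ - 0) := hDξ ▸ hDpos
  have : 0 < ψ τ₁ - ψ 0 := by
    by_contra hle
    push_neg at hle
    have : (ψ τ₁ - ψ 0) / (τ₁ - 0) ≤ 0 :=
      div_nonpos_of_nonpos_of_nonneg hle (by linarith)
    linarith
  linarith [hmax τ₁]

lemma pl_hasDerivAt (a b : ℝ) (M : ℕ) (τ : ℝ) :
    HasDerivAt (fun τ : ℝ => (a + (b+τ)^2)^M)
      (((M:ℝ) * (a+(b+τ)^2)^(M-1)) * (2*(b+τ))) τ := by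
  have h1 : HasDerivAt (fun τ : ℝ => b + τ) 1 τ := (hasDerivAt_id τ).const_add b
  have h2 : HasDerivAt (fun τ : ℝ => a + (b+τ)^2) (2*(b+τ)) τ := by
    have := (h1.pow 2).const_add a
    simpa using this.congr_deriv (by ring)
  have := h2.pow M
  exact this.congr_deriv (by ring)

lemma plD_hasDerivAt (a b : ℝ) (M : ℕ) :
    HasDerivAt (fun τ : ℝ => ((M:ℝ) * (a+(b+τ)^2)^(M-1)) * (2*(b+τ)))
      (((M:ℝ) * (((M-1:ℕ):ℝ) * (a+b^2)^(M-1-1) * (2*b))) * (2*b)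
        + ((M:ℝ) * (a+b^2)^(M-1)) * 2) 0 := by
  have h1 : HasDerivAt (fun τ : ℝ => b + τ) 1 (0:ℝ) := (hasDerivAt_id 0).const_add b
  have h2 : HasDerivAt (fun τ : ℝ => a + (b+τ)^2) (2*(b+0)) 0 := by
    have := (h1.pow 2).const_add a
    simpa using this.congr_deriv (by ring)
  have hc : HasDerivAt (fun τ : ℝ => (M:ℝ) * (a+(b+τ)^2)^(M-1))
      ((M:ℝ) * (((M-1:ℕ):ℝ) * (a+(b+0)^2)^(M-1-1) * (2*(b+0)))) 0 :=
    (h2.pow (M-1)).const_mul (M:ℝ)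
  have hd : HasDerivAt (fun τ : ℝ => 2*(b+τ)) 2 0 := by
    simpa using (h1.const_mul 2).congr_deriv (by ring)
  have := hc.mul hd
  refine this.congr_deriv ?_
  simp only [add_zero]

lemma pl_bound1 {a b : ℝ} (ha : 1 ≤ a) (M : ℕ) :
    |((M:ℝ) * (a+b^2)^(M-1)) * (2*b)| ≤ 2*(M:ℝ)*(a+b^2)^M := by
  have hw1 : (1:ℝ) ≤ a + b^2 := by nlinarith [sq_nonneg b]
  have hw0 : (0:ℝ) ≤ a + b^2 := by linarith
  have hb : |b| ≤ a + b^2 := by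
    rcases le_or_gt (|b|) 1 with h | h
    · linarith
    · nlinarith [sq_abs b, abs_nonneg b]
  rcases M with _ | M
  · simp
  · simp only [Nat.add_sub_cancel]
    have habs : |((M+1:ℕ):ℝ) * (a+b^2)^M * (2*b)| =
        ((M+1:ℕ):ℝ) * (a+b^2)^M * (2*|b|) := by
      rw [abs_mul, abs_mul, abs_mul]
      rw [abs_of_nonneg (Nat.cast_nonneg (M+1) : (0:ℝ) ≤ ((M+1:ℕ):ℝ)),
        abs_of_nonneg (pow_nonneg hw0 M)]
      norm_num
    rw [habs]
    have hpow : (a+b^2)^M * (a+b^2) = (a+b^2)^(M+1) := (pow_succ _ _).symm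
    calc ((M+1:ℕ):ℝ) * (a+b^2)^M * (2*|b|)
        ≤ ((M+1:ℕ):ℝ) * (a+b^2)^M * (2*(a+b^2)) := by gcongr
      _ = 2*((M+1:ℕ):ℝ)*(a+b^2)^(M+1) := by rw [← hpow]; ring

lemma pl_bound2 {a b : ℝ} (ha : 1 ≤ a) (M : ℕ) :
    ((M:ℝ) * (((M-1:ℕ):ℝ) * (a+b^2)^(M-1-1) * (2*b))) * (2*b)
        + ((M:ℝ) * (a+b^2)^(M-1)) * 2 ≤ 4*(M:ℝ)^2*(a+b^2)^M := by
  have hw1 : (1:ℝ) ≤ a + b^2 := by nlinarith [sq_nonneg b]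
  have hw0 : (0:ℝ) ≤ a + b^2 := by linarith
  rcases M with _ | M
  · simp
  simp only [Nat.add_sub_cancel]
  have F1 : ((M:ℕ):ℝ) * ((a+b^2)^(M-1) * b^2) ≤ ((M:ℕ):ℝ) * (a+b^2)^M := by
    rcases M with _ | N
    · simp
    · simp only [Nat.add_sub_cancel]
      have h1 : (a+b^2)^N * b^2 ≤ (a+b^2)^N * (a+b^2) := by
        nlinarith [pow_nonneg hw0 N]
      have h2 : (a+b^2)^N * (a+b^2) = (a+b^2)^(N+1) := (pow_succ _ _).symm
      exact mul_le_mul_of_nonneg_left (h2 ▸ h1) (Nat.cast_nonneg _)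
  have F2 : (a+b^2)^M ≤ (a+b^2)^(M+1) := by
    calc (a+b^2)^M = (a+b^2)^M * 1 := (mul_one _).symm
      _ ≤ (a+b^2)^M * (a+b^2) := by nlinarith [pow_nonneg hw0 M]
      _ = (a+b^2)^(M+1) := (pow_succ _ _).symm
  have c1 : ((M+1:ℕ):ℝ) = (M:ℝ)+1 := by push_cast; ring
  rw [c1]
  have hM : (0:ℝ) ≤ (M:ℝ) := Nat.cast_nonneg _
  have hq : (0:ℝ) ≤ (a+b^2)^M := pow_nonneg hw0 M
  have hr : (0:ℝ) ≤ (a+b^2)^(M+1) := pow_nonneg hw0 (M+1)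
  nlinarith [mul_le_mul_of_nonneg_left F1 (by positivity : (0:ℝ) ≤ 4*((M:ℝ)+1)),
    mul_le_mul_of_nonneg_left F2 (by positivity : (0:ℝ) ≤ 4*(M:ℝ)^2 + 6*(M:ℝ) + 2)]

lemma pderiv_diff {d : ℕ} {φ : (Fin d → ℝ) → ℝ} (hφ : ContDiff ℝ 2 φ) (i : Fin d) :
    Differentiable ℝ (fun y => fderiv ℝ φ y (Pi.single i 1)) := by
  have h1 : ContDiff ℝ 1 (fderiv ℝ φ) := hφ.fderiv_right (by norm_num)
  exact ((ContinuousLinearMap.apply ℝ ℝ (Pi.single i 1)).contDiff.comp h1).differentiable (by norm_num)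

lemma line_q {d : ℕ} (x : Fin d → ℝ) (i : Fin d) (τ : ℝ) :
    1 + ∑ j : Fin d, ((x + τ • (Pi.single i 1 : Fin d → ℝ)) j)^2
      = (1 + (∑ j : Fin d, (x j)^2) - (x i)^2) + ((x i) + τ)^2 := by
  have key : ∀ j, ((x + τ • (Pi.single i 1 : Fin d → ℝ)) j)^2
      = (x j)^2 + (if j = i then 2*τ*(x i) + τ^2 else 0) := by
    intro j
    by_cases hji : j = i
    · subst hji; simp [Pi.single_apply]; ring
    · simp [Pi.single_apply, hji]
  rw [Finset.sum_congr rfl (fun j _ => key j), Finset.sum_add_distrib]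
  rw [Finset.sum_ite_eq' Finset.univ i (fun _ => 2*τ*(x i)+τ^2)]
  simp only [Finset.mem_univ, if_true]
  ring

lemma sq_le_q {d : ℕ} (x : Fin d → ℝ) (i : Fin d) : (x i)^2 ≤ ∑ j : Fin d, (x j)^2 :=
  Finset.single_le_sum (fun j _ => sq_nonneg (x j)) (Finset.mem_univ i)

lemma sum_abs_single {d : ℕ} (c : Fin d → ℝ) (j : Fin d) (r : ℝ) :
    ∑ k : Fin d, c k * |r * (Pi.single j 1 : Fin d → ℝ) k| = c j * |r| := by
  rw [Finset.sum_eq_single j]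
  · simp [Pi.single_apply]
  · intro k _ hk; simp [Pi.single_apply, hk]
  · intro hj; exact absurd (Finset.mem_univ j) hj

end AuxLemmas
set_option maxHeartbeats 4000000 in
/-- Items (iii) and (iv) of Lemma 4.2: under the stated Lipschitz, growth, terminal-value and
PDE assumptions on `u ∈ C^{1,2}([0,T]×ℝ^d,ℝ)`, one has
(a) `|u(t,x) − u(t,𝔵)| ≤ e^{L₀(T−t)} Σ_j (K_j + (T−t)𝔏_j)|x_j − 𝔵_j|` for all `t ∈ [0,T]`, and
(b) `|(∂/∂x_i)u(t,x)| ≤ e^{L₀(T−t)}(K_i + (T−t)𝔏_i)` for all `t ∈ (0,T)`. -/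
theorem stmt17 (T : ℝ) (hT : 0 < T) (d : ℕ) (hd : 0 < d)
    (η L₀ : ℝ) (L 𝔏 K : Fin d → ℝ)
    (f : ℝ → (Fin d → ℝ) → ℝ → (Fin d → ℝ) → ℝ)
    (hfcont : ContinuousOn
      (fun p : ℝ × (Fin d → ℝ) × ℝ × (Fin d → ℝ) => f p.1 p.2.1 p.2.2.1 p.2.2.2)
      (Set.Icc 0 T ×ˢ Set.univ))
    (g : (Fin d → ℝ) → ℝ) (hgcont : Continuous g)
    (u : ℝ → (Fin d → ℝ) → ℝ)
    (hucont : ContinuousOn (fun p : ℝ × (Fin d → ℝ) => u p.1 p.2) (Set.Icc 0 T ×ˢ Set.univ))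
    (hux : ∀ t ∈ Set.Icc (0 : ℝ) T, ContDiff ℝ 2 (u t))
    (hfLip : ∀ t ∈ Set.Icc (0 : ℝ) T, ∀ x 𝔵 z 𝔷 : Fin d → ℝ, ∀ y 𝔶 : ℝ,
      |f t x y z - f t 𝔵 𝔶 𝔷|
        ≤ L₀ * |y - 𝔶| + ∑ j : Fin d, (L j * |z j - 𝔷 j| + 𝔏 j * |x j - 𝔵 j|))
    (hgLip : ∀ x 𝔵 : Fin d → ℝ, |g x - g 𝔵| ≤ ∑ i : Fin d, K i * |x i - 𝔵 i|)
    (hugrowth : ∀ t ∈ Set.Icc (0 : ℝ) T, ∀ x,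
      |u t x| ≤ η * (1 + ∑ i : Fin d, |x i|) ^ η)
    (hterm : ∀ x, u T x = g x)
    (hPDE : ∀ t ∈ Set.Icc (0 : ℝ) T, ∀ x, HasDerivWithinAt (fun s => u s x)
      (-(1 / 2 * laplacian d (u t) x
          + f t x (u t x) (fun i => pderiv d (u t) x i))) (Set.Icc 0 T) t) :
    (∀ t ∈ Set.Icc (0 : ℝ) T, ∀ x 𝔵 : Fin d → ℝ,
      |u t x - u t 𝔵|
        ≤ Real.exp (L₀ * (T - t)) * ∑ j : Fin d, (K j + (T - t) * 𝔏 j) * |x j - 𝔵 j|)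
    ∧ (∀ t ∈ Set.Ioo (0 : ℝ) T, ∀ x : Fin d → ℝ, ∀ i : Fin d,
      |pderiv d (u t) x i| ≤ Real.exp (L₀ * (T - t)) * (K i + (T - t) * 𝔏 i)) := by
  have hTmem : T ∈ Set.Icc (0:ℝ) T := Set.mem_Icc.mpr ⟨hT.le, le_rfl⟩
  -- nonnegativity of the constants
  have hL₀ : 0 ≤ L₀ := by
    have h := hfLip T hTmem 0 0 0 0 1 0
    have h0 := abs_nonneg (f T 0 1 0 - f T 0 0 0)
    simp only [sub_self, abs_zero, mul_zero, add_zero, Pi.zero_apply, mul_one,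
      Finset.sum_const_zero, sub_zero, abs_one] at h
    linarith
  have hLnn : ∀ j : Fin d, 0 ≤ L j := by
    intro j
    have h := hfLip T hTmem 0 0 (Pi.single j 1) 0 0 0
    have h0 := abs_nonneg (f T 0 0 (Pi.single j 1) - f T 0 0 0)
    simp only [Pi.zero_apply, sub_zero, sub_self, abs_zero, mul_zero, add_zero, zero_add] at h
    have hsum2 : ∑ k : Fin d, L k * |(Pi.single j 1 : Fin d → ℝ) k| = L j := by
      rw [Finset.sum_eq_single j]
      · simp
      · intro k _ hk; simp [Pi.single_apply, hk]
      · intro hj; exact absurd (Finset.mem_univ j) hj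
    rw [hsum2] at h
    linarith
  have h𝔏nn : ∀ j : Fin d, 0 ≤ 𝔏 j := by
    intro j
    have h := hfLip T hTmem (Pi.single j 1) 0 0 0 0 0
    have h0 := abs_nonneg (f T (Pi.single j 1) 0 0 - f T 0 0 0)
    simp only [Pi.zero_apply, sub_zero, sub_self, abs_zero, mul_zero, add_zero, zero_add] at h
    have hsum2 : ∑ k : Fin d, 𝔏 k * |(Pi.single j 1 : Fin d → ℝ) k| = 𝔏 j := by
      rw [Finset.sum_eq_single j]
      · simp
      · intro k _ hk; simp [Pi.single_apply, hk]
      · intro hj; exact absurd (Finset.mem_univ j) hj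
    rw [hsum2] at h
    linarith
  have hKnn : ∀ j : Fin d, 0 ≤ K j := by
    intro j
    have h := hgLip (Pi.single j 1) 0
    have h0 := abs_nonneg (g (Pi.single j 1) - g 0)
    simp only [Pi.zero_apply, sub_zero] at h
    have hsum2 : ∑ k : Fin d, K k * |(Pi.single j 1 : Fin d → ℝ) k| = K j := by
      rw [Finset.sum_eq_single j]
      · simp
      · intro k _ hk; simp [Pi.single_apply, hk]
      · intro hj; exact absurd (Finset.mem_univ j) hj
    rw [hsum2] at h
    linarith
  have hη : 0 ≤ η := by
    have h := hugrowth T hTmem 0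
    simp only [Pi.zero_apply, abs_zero, Finset.sum_const_zero, add_zero, Real.one_rpow,
      mul_one] at h
    linarith [abs_nonneg (u T 0)]
  -- fixed constants
  set m : ℕ := ⌈η⌉₊ with hm
  set M : ℕ := m + 1 with hMdef
  have hSL0 : (0:ℝ) ≤ ∑ j : Fin d, L j := Finset.sum_nonneg (fun j _ => hLnn j)
  set cw : ℝ := 2*(d:ℝ)*(M:ℝ)^2 + 2*(M:ℝ)*(∑ j : Fin d, L j) with hcw
  have hcw0 : 0 ≤ cw := by
    rw [hcw]
    have h1 : (0:ℝ) ≤ 2*(M:ℝ)*(∑ j : Fin d, L j) := mul_nonneg (by positivity) hSL0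
    positivity
  have hd1 : (1:ℝ) ≤ (d:ℝ) := by exact_mod_cast hd
  have hq0 : ∀ y : Fin d → ℝ, (0:ℝ) ≤ ∑ i : Fin d, (y i)^2 :=
    fun y => Finset.sum_nonneg fun i _ => sq_nonneg _
  -- growth bound for differences
  have hgrow : ∀ h : Fin d → ℝ, ∃ C₂ : ℝ, 0 ≤ C₂ ∧ ∀ s ∈ Set.Icc (0:ℝ) T, ∀ y : Fin d → ℝ,
      u s (y+h) - u s y ≤ C₂ * (1 + ∑ i : Fin d, (y i)^2)^m := by
    intro h
    have hH0 : (0:ℝ) ≤ ∑ j : Fin d, |h j| := Finset.sum_nonneg fun j _ => abs_nonneg _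
    set H := ∑ j : Fin d, |h j| with hH
    refine ⟨2*η*(1+H)^m*((d:ℝ)+1)^m, by positivity, ?_⟩
    intro s hs y
    set S := ∑ i : Fin d, |y i| with hS
    set q := ∑ i : Fin d, (y i)^2 with hq
    have hS0 : 0 ≤ S := Finset.sum_nonneg fun i _ => abs_nonneg _
    have hq0' : 0 ≤ q := Finset.sum_nonneg fun i _ => sq_nonneg _
    have hSq : S ≤ (d:ℝ) + q := by
      have hpt : ∀ i : Fin d, |y i| ≤ 1 + (y i)^2 := by
        intro i
        rcases le_or_gt (|y i|) 1 with h1 | h1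
        · nlinarith [sq_nonneg (y i)]
        · nlinarith [sq_abs (y i)]
      calc S = ∑ i : Fin d, |y i| := hS
        _ ≤ ∑ i : Fin d, (1 + (y i)^2) := Finset.sum_le_sum (fun i _ => hpt i)
        _ = (d:ℝ) + q := by
            rw [Finset.sum_add_distrib, hq]
            simp [Finset.card_univ]
    have key : ∀ z : Fin d → ℝ, (∑ i : Fin d, |z i|) ≤ S + H →
        |u s z| ≤ η*(1+H)^m*((d:ℝ)+1)^m * (1+q)^m := by
      intro z hz
      have h1 := hugrowth s hs z
      have hbase0 : (0:ℝ) ≤ 1 + ∑ i : Fin d, |z i| := by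
        have := Finset.sum_nonneg (fun i (_ : i ∈ Finset.univ) => abs_nonneg (z i))
        linarith
      have h2 : (1 + ∑ i : Fin d, |z i| : ℝ)^η ≤ (1+(S+H))^η :=
        Real.rpow_le_rpow hbase0 (by linarith) hη
      have h3 : (1+(S+H):ℝ)^η ≤ (1+(S+H):ℝ)^(m:ℝ) := by
        apply Real.rpow_le_rpow_of_exponent_le (by linarith)
        rw [hm]; exact Nat.le_ceil η
      have h4 : (1+(S+H):ℝ)^(m:ℝ) = (1+(S+H))^m := Real.rpow_natCast _ m
      have h5 : (1+(S+H):ℝ)^m ≤ ((1+H)*(((d:ℝ)+1)*(1+q)))^m := by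
        apply pow_le_pow_left₀ (by linarith)
        nlinarith [mul_nonneg hH0 (by nlinarith : (0:ℝ) ≤ ((d:ℝ)+1)*(1+q) - 1),
          mul_nonneg (by linarith : (0:ℝ) ≤ (d:ℝ)) hq0']
      calc |u s z| ≤ η * (1 + ∑ i : Fin d, |z i|)^η := h1
        _ ≤ η * ((1+H)*(((d:ℝ)+1)*(1+q)))^m := by
            apply mul_le_mul_of_nonneg_left _ hη
            calc (1 + ∑ i : Fin d, |z i| : ℝ)^η ≤ (1+(S+H))^η := h2
              _ ≤ (1+(S+H):ℝ)^(m:ℝ) := h3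
              _ = (1+(S+H))^m := h4
              _ ≤ ((1+H)*(((d:ℝ)+1)*(1+q)))^m := h5
        _ = η*(1+H)^m*((d:ℝ)+1)^m*(1+q)^m := by rw [mul_pow, mul_pow]; ring
    have hzy : (∑ i : Fin d, |y i|) ≤ S + H := by rw [← hS]; linarith
    have hz2 : (∑ i : Fin d, |(y+h) i|) ≤ S + H := by
      calc ∑ i : Fin d, |(y+h) i| ≤ ∑ i : Fin d, (|y i| + |h i|) :=
            Finset.sum_le_sum (fun i _ => by rw [Pi.add_apply]; exact abs_add_le _ _)
        _ = S + H := by rw [Finset.sum_add_distrib, ← hS, ← hH]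
    have b1 := key (y+h) hz2
    have b2 := key y hzy
    have hd1' : u s (y+h) - u s y ≤ |u s (y+h)| + |u s y| := by
      have := le_abs_self (u s (y+h))
      have := neg_abs_le (u s y)
      linarith
    calc u s (y+h) - u s y ≤ |u s (y+h)| + |u s y| := hd1'
      _ ≤ 2*η*(1+H)^m*((d:ℝ)+1)^m * (1+q)^m := by linarith
  have keyε : ∀ (h : Fin d → ℝ) (ε lam : ℝ), 0 < ε → 0 < lam → ∀ t ∈ Set.Icc (0:ℝ) T,
      ∀ x : Fin d → ℝ,
      Real.exp (L₀*(t-T)) * (u t (x+h) - u t x)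
        ≤ ((∑ j : Fin d, K j * |h j|) + (T-t) * ∑ j : Fin d, 𝔏 j * |h j|)
          + ε * Real.exp (cw*(T-t)) * (1 + ∑ i : Fin d, (x i)^2)^M + lam*(T-t) := by
    intro h ε lam hε hlam
    by_contra hcon
    push_neg at hcon
    obtain ⟨t₀, ht₀, x₀, hx₀⟩ := hcon
    obtain ⟨C₂, hC₂0, hC₂⟩ := hgrow h
    set SK := ∑ j : Fin d, K j * |h j| with hSK
    set SLh := ∑ j : Fin d, 𝔏 j * |h j| with hSLh
    have hSK0 : 0 ≤ SK := Finset.sum_nonneg fun j _ => mul_nonneg (hKnn j) (abs_nonneg _)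
    have hSLh0 : 0 ≤ SLh := Finset.sum_nonneg fun j _ => mul_nonneg (h𝔏nn j) (abs_nonneg _)
    obtain ⟨Φ, hΦ⟩ : ∃ Φ : ℝ → (Fin d → ℝ) → ℝ, ∀ s y, Φ s y =
        Real.exp (L₀*(s-T)) * (u s (y+h) - u s y) - (SK + (T-s)*SLh)
          - ε * Real.exp (cw*(T-s)) * (1 + ∑ i : Fin d, (y i)^2)^M - lam*(T-s) :=
      ⟨fun s y => _, fun s y => rfl⟩
    have hx₀pos : 0 < Φ t₀ x₀ := by
      rw [hΦ]; linarith
    set R := Real.sqrt (C₂/ε) with hR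
    have hR0 : 0 ≤ R := Real.sqrt_nonneg _
    have houts : ∀ s ∈ Set.Icc (0:ℝ) T, ∀ y : Fin d → ℝ, (∃ i, R < |y i|) → Φ s y ≤ 0 := by
      rintro s hs y ⟨i, hi⟩
      have hq : C₂ / ε < (y i)^2 := by
        have h1 : R^2 < (y i)^2 := by nlinarith [sq_abs (y i), abs_nonneg (y i)]
        rwa [hR, Real.sq_sqrt (div_nonneg hC₂0 hε.le)] at h1
      have hqy : C₂ ≤ ε * (1 + ∑ i : Fin d, (y i)^2) := by
        have h2 : (y i)^2 ≤ ∑ i : Fin d, (y i)^2 := sq_le_q y i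
        have h3 : C₂ / ε < ∑ i : Fin d, (y i)^2 := lt_of_lt_of_le hq h2
        have h4 : C₂ < (∑ i : Fin d, (y i)^2) * ε := by rwa [div_lt_iff₀ hε] at h3
        nlinarith [hq0 y]
      rw [hΦ]
      have hqy0 := hq0 y
      set qy := ∑ i : Fin d, (y i)^2 with hqy'
      have ht1 : Real.exp (L₀*(s-T)) * (u s (y+h) - u s y) ≤ C₂ * (1+qy)^m := by
        rcases le_or_gt (u s (y+h) - u s y) 0 with hd0 | hd0
        · have hle : Real.exp (L₀*(s-T)) * (u s (y+h) - u s y) ≤ 0 := by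
            nlinarith [Real.exp_pos (L₀*(s-T))]
          have : (0:ℝ) ≤ C₂ * (1+qy)^m := by positivity
          linarith
        · have hexpo : L₀*(s-T) ≤ 0 := by nlinarith [mul_nonneg hL₀ (sub_nonneg.mpr hs.2)]
          have he1 : Real.exp (L₀*(s-T)) ≤ 1 := by
            calc Real.exp (L₀*(s-T)) ≤ Real.exp 0 := Real.exp_le_exp.mpr hexpo
              _ = 1 := Real.exp_zero
          have hC := hC₂ s hs y
          nlinarith [mul_nonneg (sub_nonneg.mpr he1) hd0.le]
      have ht3 : C₂ * (1+qy)^m ≤ ε * Real.exp (cw*(T-s)) * (1+qy)^M := by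
        have hE1 : 1 ≤ Real.exp (cw*(T-s)) :=
          Real.one_le_exp (mul_nonneg hcw0 (sub_nonneg.mpr hs.2))
        calc C₂ * (1+qy)^m ≤ (ε*(1+qy)) * (1+qy)^m :=
              mul_le_mul_of_nonneg_right hqy (by positivity)
          _ = ε * (1+qy)^M := by rw [hMdef, pow_succ]; ring
          _ ≤ ε * Real.exp (cw*(T-s)) * (1+qy)^M := by
              nlinarith [pow_nonneg (by linarith : (0:ℝ) ≤ 1+qy) M,
                mul_nonneg hε.le (pow_nonneg (by linarith : (0:ℝ) ≤ 1+qy) M)]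
      have hrest : 0 ≤ SK + (T-s)*SLh := by nlinarith [sub_nonneg.mpr hs.2]
      have hlam' : 0 ≤ lam*(T-s) := mul_nonneg hlam.le (sub_nonneg.mpr hs.2)
      linarith
    have hball : ∀ {y : Fin d → ℝ},
        (∀ i, |y i| ≤ R) ↔ y ∈ Set.Icc (fun _ => -R) (fun _ : Fin d => R) := by
      intro y; rw [Set.mem_Icc]
      constructor
      · intro hy
        exact ⟨fun i => neg_le_of_abs_le (hy i), fun i => le_of_abs_le (hy i)⟩
      · intro hy i; exact abs_le.mpr ⟨hy.1 i, hy.2 i⟩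
    have hx₀ball : x₀ ∈ Set.Icc (fun _ => -R) (fun _ : Fin d => R) := by
      by_contra hxb
      rw [← hball] at hxb; push_neg at hxb
      obtain ⟨i, hi⟩ := hxb
      linarith [houts t₀ ht₀ x₀ ⟨i, hi⟩, hx₀pos]
    have hKcpt : IsCompact (Set.Icc (0:ℝ) T ×ˢ Set.Icc (fun _ => -R) (fun _ : Fin d => R)) :=
      isCompact_Icc.prod isCompact_Icc
    have hcontΦ : ContinuousOn (fun p : ℝ × (Fin d → ℝ) => Φ p.1 p.2)
        (Set.Icc (0:ℝ) T ×ˢ (Set.univ : Set (Fin d → ℝ))) := by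
      simp only [hΦ]
      apply ContinuousOn.sub
      apply ContinuousOn.sub
      apply ContinuousOn.sub
      · apply ContinuousOn.mul
        · exact (Real.continuous_exp.comp
            (continuous_const.mul (continuous_fst.sub continuous_const))).continuousOn
        · apply ContinuousOn.sub
          · have hmap : Set.MapsTo (fun p : ℝ × (Fin d → ℝ) => (p.1, p.2 + h))
                (Set.Icc (0:ℝ) T ×ˢ (Set.univ : Set (Fin d → ℝ)))
                (Set.Icc (0:ℝ) T ×ˢ (Set.univ : Set (Fin d → ℝ))) := fun p hp => ⟨hp.1, trivial⟩
            exact hucont.comp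
              ((continuous_fst.prodMk (continuous_snd.add continuous_const)).continuousOn) hmap
          · exact hucont
      · exact (continuous_const.add
          ((continuous_const.sub continuous_fst).mul continuous_const)).continuousOn
      · apply ContinuousOn.mul
        · exact (continuous_const.mul (Real.continuous_exp.comp
            (continuous_const.mul (continuous_const.sub continuous_fst)))).continuousOn
        · exact ((continuous_const.add (continuous_finset_sum _
            (fun i _ => ((continuous_apply i).comp continuous_snd).pow 2))).pow M).continuousOn
      · exact (continuous_const.mul (continuous_const.sub continuous_fst)).continuousOn
    obtain ⟨p₁, hp₁mem, hp₁max⟩ := hKcpt.exists_isMaxOn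
      ⟨(t₀, x₀), Set.mem_prod.mpr ⟨ht₀, hx₀ball⟩⟩
      (hcontΦ.mono (Set.prod_mono_right (Set.subset_univ _)))
    obtain ⟨s₁, x₁⟩ := p₁
    have hmax' := isMaxOn_iff.mp hp₁max
    have hs₁ : s₁ ∈ Set.Icc (0:ℝ) T := hp₁mem.1
    have hglob : ∀ s ∈ Set.Icc (0:ℝ) T, ∀ y : Fin d → ℝ, Φ s y ≤ Φ s₁ x₁ := by
      intro s hs y
      by_cases hy : y ∈ Set.Icc (fun _ => -R) (fun _ : Fin d => R)
      · exact hmax' (s, y) (Set.mem_prod.mpr ⟨hs, hy⟩)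
      · rw [← hball] at hy; push_neg at hy
        obtain ⟨i, hi⟩ := hy
        have h1 := houts s hs y ⟨i, hi⟩
        have h2 : Φ t₀ x₀ ≤ Φ s₁ x₁ := hmax' (t₀, x₀) (Set.mem_prod.mpr ⟨ht₀, hx₀ball⟩)
        linarith
    have hpos : 0 < Φ s₁ x₁ :=
      lt_of_lt_of_le hx₀pos (hmax' (t₀, x₀) (Set.mem_prod.mpr ⟨ht₀, hx₀ball⟩))
    rcases eq_or_lt_of_le hs₁.2 with hsT | hsT
    · -- terminal time: contradiction with the Lipschitz bound on g
      subst hsT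
      rw [hΦ] at hpos
      simp only [sub_self, mul_zero, Real.exp_zero, one_mul, zero_mul, add_zero,
        sub_zero, mul_one, hterm] at hpos
      have hgb := hgLip (x₁+h) x₁
      have hsum : ∑ i : Fin d, K i * |(x₁+h) i - x₁ i| = SK := by
        rw [hSK]
        apply Finset.sum_congr rfl
        intro j _
        simp [Pi.add_apply]
      rw [hsum] at hgb
      have hφ1 : (0:ℝ) < ε * (1 + ∑ i : Fin d, (x₁ i)^2)^M := by
        have := hq0 x₁; positivity
      have := le_abs_self (g (x₁+h) - g x₁)
      linarith
    · -- interior maximum: contradiction via the PDE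
      set A := Real.exp (L₀*(s₁-T)) with hA
      set Ec := Real.exp (cw*(T-s₁)) with hEc
      have hq₁0 : (0:ℝ) ≤ ∑ i : Fin d, (x₁ i)^2 := hq0 x₁
      set q₁ := ∑ i : Fin d, (x₁ i)^2 with hq₁
      set φs := (1 + q₁)^M with hφs
      have hA0 : 0 < A := Real.exp_pos _
      have hA1 : A ≤ 1 := by
        have he : L₀*(s₁-T) ≤ 0 := by nlinarith [mul_nonneg hL₀ (sub_nonneg.mpr hs₁.2)]
        rw [hA]
        calc Real.exp (L₀*(s₁-T)) ≤ Real.exp 0 := Real.exp_le_exp.mpr he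
          _ = 1 := Real.exp_zero
      have hEc0 : 0 < Ec := Real.exp_pos _
      have hφs0 : (0:ℝ) < φs := by rw [hφs]; positivity
      have hC2u : ContDiff ℝ 2 (u s₁) := hux s₁ hs₁
      have hdiffu : Differentiable ℝ (u s₁) := hC2u.differentiable (by norm_num)
      set w := u s₁ (x₁+h) - u s₁ x₁ with hw
      have hΦval : Φ s₁ x₁ = A*w - (SK + (T-s₁)*SLh) - ε*Ec*φs - lam*(T-s₁) := by
        rw [hΦ, hA, hEc, hw, hφs, hq₁]
      have hw0 : 0 < A*w := by
        have h1 : 0 ≤ T - s₁ := sub_nonneg.mpr hs₁.2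
        have h2 := mul_nonneg h1 hSLh0
        have h3 := mul_nonneg hlam.le h1
        have h4 := mul_pos (mul_pos hε hEc0) hφs0
        linarith [hpos, hΦval]
      have hwpos : 0 < w := by
        by_contra hc; push_neg at hc
        nlinarith [hw0, hA0]
      have hspace : ∀ i : Fin d,
          |A * (pderiv d (u s₁) (x₁+h) i - pderiv d (u s₁) x₁ i)| ≤ ε * Ec * (2*(M:ℝ)*φs)
          ∧ A * (pderiv d (fun z => pderiv d (u s₁) z i) (x₁+h) i
              - pderiv d (fun z => pderiv d (u s₁) z i) x₁ i) ≤ ε * Ec * (4*(M:ℝ)^2*φs) := by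
        intro i
        have ha1 : (1:ℝ) ≤ 1 + q₁ - (x₁ i)^2 := by
          have hle := sq_le_q x₁ i
          rw [hq₁]; linarith
        obtain ⟨ψ, hψ⟩ : ∃ ψ : ℝ → ℝ, ∀ τ, ψ τ =
            A * (u s₁ ((x₁+h) + τ • (Pi.single i 1 : Fin d → ℝ))
              - u s₁ (x₁ + τ • (Pi.single i 1 : Fin d → ℝ)))
            - (SK + (T-s₁)*SLh)
            - ε*Ec*((1 + q₁ - (x₁ i)^2) + ((x₁ i)+τ)^2)^M - lam*(T-s₁) :=
          ⟨fun τ => _, fun τ => rfl⟩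
        obtain ⟨Dψ, hDψ⟩ : ∃ Dψ : ℝ → ℝ, ∀ τ, Dψ τ =
            A * (fderiv ℝ (u s₁) ((x₁+h) + τ • (Pi.single i 1 : Fin d → ℝ)) (Pi.single i 1)
              - fderiv ℝ (u s₁) (x₁ + τ • (Pi.single i 1 : Fin d → ℝ)) (Pi.single i 1))
            - ε*Ec*(((M:ℝ) * ((1 + q₁ - (x₁ i)^2) + ((x₁ i)+τ)^2)^(M-1)) * (2*((x₁ i)+τ))) :=
          ⟨fun τ => _, fun τ => rfl⟩
        have hψfun : ψ = fun τ =>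
            A * (u s₁ ((x₁+h) + τ • (Pi.single i 1 : Fin d → ℝ))
              - u s₁ (x₁ + τ • (Pi.single i 1 : Fin d → ℝ)))
            - (SK + (T-s₁)*SLh)
            - ε*Ec*((1 + q₁ - (x₁ i)^2) + ((x₁ i)+τ)^2)^M - lam*(T-s₁) := funext hψ
        have hDψfun : Dψ = fun τ =>
            A * (fderiv ℝ (u s₁) ((x₁+h) + τ • (Pi.single i 1 : Fin d → ℝ)) (Pi.single i 1)
              - fderiv ℝ (u s₁) (x₁ + τ • (Pi.single i 1 : Fin d → ℝ)) (Pi.single i 1))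
            - ε*Ec*(((M:ℝ) * ((1 + q₁ - (x₁ i)^2) + ((x₁ i)+τ)^2)^(M-1)) * (2*((x₁ i)+τ))) :=
          funext hDψ
        have hψd : ∀ τ, HasDerivAt ψ (Dψ τ) τ := by
          intro τ
          have g1 := line_hasDerivAt (u s₁) (x₁+h) (Pi.single i 1) τ (hdiffu _)
          have g2 := line_hasDerivAt (u s₁) x₁ (Pi.single i 1) τ (hdiffu _)
          have g3 := pl_hasDerivAt (1 + q₁ - (x₁ i)^2) (x₁ i) M τ
          have hb := ((((g1.sub g2).const_mul A).sub_const (SK + (T-s₁)*SLh)).sub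
            (g3.const_mul (ε*Ec))).sub_const (lam*(T-s₁))
          rw [hψfun, hDψ]
          exact hb
        have e0 : ∀ y : Fin d → ℝ, y + (0:ℝ) • (Pi.single i 1 : Fin d → ℝ) = y := by
          intro y; simp
        have hψφ : ∀ τ, ψ τ = Φ s₁ (x₁ + τ • (Pi.single i 1 : Fin d → ℝ)) := by
          intro τ
          rw [hψ, hΦ]
          rw [add_right_comm x₁ (τ • (Pi.single i 1 : Fin d → ℝ)) h]
          rw [line_q x₁ i τ, ← hq₁, hA, hEc]
        have hψmax : ∀ τ, ψ τ ≤ ψ 0 := by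
          intro τ
          rw [hψφ τ, hψφ 0, e0 x₁]
          exact hglob s₁ hs₁ _
        have hF1 := line_hasDerivAt (fun y => fderiv ℝ (u s₁) y (Pi.single i 1)) (x₁+h)
          (Pi.single i 1) 0 ((pderiv_diff hC2u i) _)
        have hF2 := line_hasDerivAt (fun y => fderiv ℝ (u s₁) y (Pi.single i 1)) x₁
          (Pi.single i 1) 0 ((pderiv_diff hC2u i) _)
        have hplD := plD_hasDerivAt (1 + q₁ - (x₁ i)^2) (x₁ i) M
        have hDψd : HasDerivAt Dψ
            (A * (fderiv ℝ (fun y => fderiv ℝ (u s₁) y (Pi.single i 1))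
                ((x₁+h) + (0:ℝ) • (Pi.single i 1 : Fin d → ℝ)) (Pi.single i 1)
              - fderiv ℝ (fun y => fderiv ℝ (u s₁) y (Pi.single i 1))
                (x₁ + (0:ℝ) • (Pi.single i 1 : Fin d → ℝ)) (Pi.single i 1))
            - ε*Ec*(((M:ℝ) * (((M-1:ℕ):ℝ) * ((1 + q₁ - (x₁ i)^2)+(x₁ i)^2)^(M-1-1)
                * (2*(x₁ i)))) * (2*(x₁ i))
              + ((M:ℝ) * ((1 + q₁ - (x₁ i)^2)+(x₁ i)^2)^(M-1)) * 2)) 0 := by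
          rw [hDψfun]
          exact ((hF1.sub hF2).const_mul A).sub (hplD.const_mul (ε*Ec))
        obtain ⟨hzero, hsec⟩ := secondDeriv_nonpos_of_max hψd hDψd hψmax
        constructor
        · have hzero' : A * (pderiv d (u s₁) (x₁+h) i - pderiv d (u s₁) x₁ i)
              = ε*Ec*(((M:ℝ) * ((1 + q₁ - (x₁ i)^2) + (x₁ i)^2)^(M-1)) * (2*(x₁ i))) := by
            rw [hDψ] at hzero
            rw [e0 (x₁+h), e0 x₁] at hzero
            simp only [add_zero] at hzero
            unfold pderiv
            linarith
          rw [hzero', abs_mul, abs_of_nonneg (by positivity : (0:ℝ) ≤ ε*Ec)]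
          have hb1 := pl_bound1 (a := 1 + q₁ - (x₁ i)^2) (b := x₁ i) ha1 M
          have hgle := mul_le_mul_of_nonneg_left hb1 (by positivity : (0:ℝ) ≤ ε*Ec)
          have hbase : (1 + q₁ - (x₁ i)^2) + (x₁ i)^2 = 1 + q₁ := by ring
          rw [hbase, ← hφs] at hgle
          rw [hbase]
          exact hgle
        · rw [e0 (x₁+h), e0 x₁] at hsec
          have hbase : (1 + q₁ - (x₁ i)^2) + (x₁ i)^2 = 1 + q₁ := by ring
          rw [hbase] at hsec
          have hb2 := pl_bound2 (a := 1 + q₁ - (x₁ i)^2) (b := x₁ i) ha1 M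
          have hble := mul_le_mul_of_nonneg_left hb2 (by positivity : (0:ℝ) ≤ ε*Ec)
          rw [hbase, ← hφs] at hble
          unfold pderiv
          linarith [hsec, hble]
      have hgradb : ∀ j : Fin d, A * |pderiv d (u s₁) (x₁+h) j - pderiv d (u s₁) x₁ j|
          ≤ ε * Ec * (2*(M:ℝ)*φs) := by
        intro j
        have hsp := (hspace j).1
        rwa [abs_mul, abs_of_pos hA0] at hsp
      have hlapb : A * (laplacian d (u s₁) (x₁+h) - laplacian d (u s₁) x₁)
          ≤ (d:ℝ) * (ε * Ec * (4*(M:ℝ)^2*φs)) := by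
        have hlapeq : ∀ y : Fin d → ℝ, laplacian d (u s₁) y
            = ∑ i : Fin d, pderiv d (fun z => pderiv d (u s₁) z i) y i := fun y => rfl
        rw [hlapeq, hlapeq, ← Finset.sum_sub_distrib, Finset.mul_sum]
        calc (∑ i : Fin d, A * (pderiv d (fun z => pderiv d (u s₁) z i) (x₁+h) i
                - pderiv d (fun z => pderiv d (u s₁) z i) x₁ i))
            ≤ ∑ _i : Fin d, ε * Ec * (4*(M:ℝ)^2*φs) :=
              Finset.sum_le_sum (fun i _ => (hspace i).2)
          _ = (d:ℝ) * (ε * Ec * (4*(M:ℝ)^2*φs)) := by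
              simp [Finset.sum_const, Finset.card_univ, nsmul_eq_mul]
      have hU1 := hPDE s₁ hs₁ (x₁+h)
      have hU2 := hPDE s₁ hs₁ x₁
      have hAd : HasDerivAt (fun s => Real.exp (L₀*(s-T))) (A * L₀) s₁ := by
        have h1 : HasDerivAt (fun s : ℝ => L₀*(s-T)) L₀ s₁ :=
          (((hasDerivAt_id s₁).sub_const T).const_mul L₀).congr_deriv (by ring)
        have h2 := h1.exp
        rw [hA]
        exact h2
      have hmidd : HasDerivAt (fun s : ℝ => SK + (T-s)*SLh) (-SLh) s₁ := by
        have h1 := (((hasDerivAt_id s₁).const_sub T).mul_const SLh).const_add SK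
        exact h1.congr_deriv (by ring)
      have hexp3 : HasDerivAt (fun s : ℝ => ε * Real.exp (cw*(T-s)) * φs)
          (-(ε * (Ec * cw) * φs)) s₁ := by
        have h1 : HasDerivAt (fun s : ℝ => cw*(T-s)) (-cw) s₁ :=
          (((hasDerivAt_id s₁).const_sub T).const_mul cw).congr_deriv (by ring)
        have h2 := h1.exp
        have h3 := (h2.const_mul ε).mul_const φs
        rw [← hEc] at h3
        exact h3.congr_deriv (by ring)
      have hlamd : HasDerivAt (fun s : ℝ => lam*(T-s)) (-lam) s₁ :=
        (((hasDerivAt_id s₁).const_sub T).const_mul lam).congr_deriv (by ring)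
      have hfuneq : (fun s => Φ s x₁) = fun s =>
          Real.exp (L₀*(s-T)) * (u s (x₁+h) - u s x₁) - (SK + (T-s)*SLh)
            - ε*Real.exp (cw*(T-s))*φs - lam*(T-s) := by
        funext s
        rw [hΦ, ← hq₁, ← hφs]
      have hψt : HasDerivWithinAt (fun s => Φ s x₁)
          ((A * L₀ * w
            + A * ((-(1 / 2 * laplacian d (u s₁) (x₁+h)
                + f s₁ (x₁+h) (u s₁ (x₁+h)) (fun i => pderiv d (u s₁) (x₁+h) i)))
              - (-(1 / 2 * laplacian d (u s₁) x₁
                + f s₁ x₁ (u s₁ x₁) (fun i => pderiv d (u s₁) x₁ i)))))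
            - (-SLh) - (-(ε * (Ec * cw) * φs)) - (-lam)) (Set.Icc 0 T) s₁ := by
        rw [hfuneq, hA, hw]
        exact (((hAd.hasDerivWithinAt.mul (hU1.sub hU2)).sub
          hmidd.hasDerivWithinAt).sub hexp3.hasDerivWithinAt).sub hlamd.hasDerivWithinAt
      have hmaxt : ∀ s ∈ Set.Icc s₁ T, Φ s x₁ ≤ Φ s₁ x₁ :=
        fun s hs => hglob s ⟨le_trans hs₁.1 hs.1, hs.2⟩ x₁
      have hDt0 := deriv_nonpos_of_isMaxOn hs₁.1 hsT hψt hmaxt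
      have hfd := hfLip s₁ hs₁ (x₁+h) x₁ (fun i => pderiv d (u s₁) (x₁+h) i)
        (fun i => pderiv d (u s₁) x₁ i) (u s₁ (x₁+h)) (u s₁ x₁)
      have hsimp : ∀ j : Fin d, (L j * |(fun i => pderiv d (u s₁) (x₁+h) i) j
            - (fun i => pderiv d (u s₁) x₁ i) j| + 𝔏 j * |(x₁+h) j - x₁ j|)
          = L j * |pderiv d (u s₁) (x₁+h) j - pderiv d (u s₁) x₁ j| + 𝔏 j * |h j| := by
        intro j; simp [Pi.add_apply]
      rw [Finset.sum_congr rfl (fun j _ => hsimp j), Finset.sum_add_distrib, ← hSLh,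
        ← hw, abs_of_pos hwpos] at hfd
      have hAfd : A * (f s₁ (x₁+h) (u s₁ (x₁+h)) (fun i => pderiv d (u s₁) (x₁+h) i)
          - f s₁ x₁ (u s₁ x₁) (fun i => pderiv d (u s₁) x₁ i))
          ≤ L₀*(A*w) + (∑ j : Fin d, L j)*(ε * Ec * (2*(M:ℝ)*φs)) + A*SLh := by
        have h1 := mul_le_mul_of_nonneg_left
          (le_abs_self (f s₁ (x₁+h) (u s₁ (x₁+h)) (fun i => pderiv d (u s₁) (x₁+h) i)
            - f s₁ x₁ (u s₁ x₁) (fun i => pderiv d (u s₁) x₁ i))) hA0.le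
        have h2 := mul_le_mul_of_nonneg_left hfd hA0.le
        have h3 : A*(∑ j : Fin d, L j * |pderiv d (u s₁) (x₁+h) j - pderiv d (u s₁) x₁ j|)
            ≤ (∑ j : Fin d, L j)*(ε * Ec * (2*(M:ℝ)*φs)) := by
          rw [Finset.mul_sum, Finset.sum_mul]
          apply Finset.sum_le_sum
          intro j _
          calc A * (L j * |pderiv d (u s₁) (x₁+h) j - pderiv d (u s₁) x₁ j|)
              = L j * (A * |pderiv d (u s₁) (x₁+h) j - pderiv d (u s₁) x₁ j|) := by ring
            _ ≤ L j * (ε * Ec * (2*(M:ℝ)*φs)) :=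
              mul_le_mul_of_nonneg_left (hgradb j) (hLnn j)
        nlinarith [h1, h2, h3]
      have hexpand : ε * (Ec * cw) * φs
          = 2*(d:ℝ)*(M:ℝ)^2*(ε*(Ec*φs)) + 2*(M:ℝ)*(∑ j : Fin d, L j)*(ε*(Ec*φs)) := by
        rw [hcw]; ring
      have hASL : A*SLh ≤ SLh := by nlinarith [hA1, hSLh0]
      clear_value A Ec q₁ φs w
      linarith [hDt0, hlapb, hAfd, hASL, hexpand, hlam]

  -- pass to the limit ε, lam → 0
  have key : ∀ (h : Fin d → ℝ), ∀ t ∈ Set.Icc (0:ℝ) T, ∀ x : Fin d → ℝ,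
      u t (x+h) - u t x ≤ Real.exp (L₀*(T-t)) * ∑ j : Fin d, (K j + (T-t)*𝔏 j)*|h j| := by
    intro h t ht x
    have hqx : (0:ℝ) ≤ ∑ i : Fin d, (x i)^2 := hq0 x
    have hsum : ∑ j : Fin d, (K j + (T-t)*𝔏 j)*|h j|
        = (∑ j : Fin d, K j * |h j|) + (T-t) * ∑ j : Fin d, 𝔏 j * |h j| := by
      rw [Finset.mul_sum, ← Finset.sum_add_distrib]
      apply Finset.sum_congr rfl
      intro j _
      ring
    have hmain : Real.exp (L₀*(t-T)) * (u t (x+h) - u t x)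
        ≤ (∑ j : Fin d, K j * |h j|) + (T-t) * ∑ j : Fin d, 𝔏 j * |h j| := by
      apply le_of_forall_pos_le_add
      intro δ hδ
      have hφx1 : (1:ℝ) ≤ (1 + ∑ i : Fin d, (x i)^2)^M := by
        calc (1:ℝ) = 1^M := (one_pow M).symm
          _ ≤ (1 + ∑ i : Fin d, (x i)^2)^M := by
              apply pow_le_pow_left₀ (by norm_num) (by linarith)
      have hET : (0:ℝ) < Real.exp (cw*T) * (1 + ∑ i : Fin d, (x i)^2)^M :=
        mul_pos (Real.exp_pos _) (by linarith)
      have hε0p : 0 < δ/(2*(Real.exp (cw*T) * (1 + ∑ i : Fin d, (x i)^2)^M)) := by positivity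
      have hlam0p : 0 < δ/(2*(T+1)) := by positivity
      have hk := keyε h (δ/(2*(Real.exp (cw*T) * (1 + ∑ i : Fin d, (x i)^2)^M)))
        (δ/(2*(T+1))) hε0p hlam0p t ht x
      have hb1 : (δ/(2*(Real.exp (cw*T) * (1 + ∑ i : Fin d, (x i)^2)^M)))
          * Real.exp (cw*(T-t)) * (1 + ∑ i : Fin d, (x i)^2)^M ≤ δ/2 := by
        have hle : Real.exp (cw*(T-t)) ≤ Real.exp (cw*T) := by
          apply Real.exp_le_exp.mpr
          nlinarith [ht.1, hcw0]
        have h1 : (δ/(2*(Real.exp (cw*T) * (1 + ∑ i : Fin d, (x i)^2)^M)))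
            * Real.exp (cw*(T-t)) * (1 + ∑ i : Fin d, (x i)^2)^M
            ≤ (δ/(2*(Real.exp (cw*T) * (1 + ∑ i : Fin d, (x i)^2)^M)))
            * Real.exp (cw*T) * (1 + ∑ i : Fin d, (x i)^2)^M := by
          have := mul_le_mul_of_nonneg_right
            (mul_le_mul_of_nonneg_left hle hε0p.le) (by linarith : (0:ℝ) ≤ (1 + ∑ i : Fin d, (x i)^2)^M)
          linarith [this]
        have heq : (δ/(2*(Real.exp (cw*T) * (1 + ∑ i : Fin d, (x i)^2)^M)))
            * Real.exp (cw*T) * (1 + ∑ i : Fin d, (x i)^2)^M = δ/2 := by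
          field_simp
        linarith
      have hb2 : (δ/(2*(T+1)))*(T-t) ≤ δ/2 := by
        have h1 : T - t ≤ T + 1 := by linarith [ht.1]
        have h2 : (δ/(2*(T+1)))*(T-t) ≤ (δ/(2*(T+1)))*(T+1) :=
          mul_le_mul_of_nonneg_left h1 hlam0p.le
        have heq : (δ/(2*(T+1)))*(T+1) = δ/2 := by
          field_simp
        linarith
      linarith [hk]
    have hinv : Real.exp (L₀*(T-t)) * Real.exp (L₀*(t-T)) = 1 := by
      rw [← Real.exp_add, show L₀*(T-t) + L₀*(t-T) = 0 from by ring, Real.exp_zero]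
    have hEpos : (0:ℝ) < Real.exp (L₀*(T-t)) := Real.exp_pos _
    rw [hsum]
    have h2 := mul_le_mul_of_nonneg_left hmain hEpos.le
    rw [← mul_assoc, hinv, one_mul] at h2
    exact h2
  have partA : ∀ t ∈ Set.Icc (0:ℝ) T, ∀ x 𝔵 : Fin d → ℝ,
      |u t x - u t 𝔵| ≤ Real.exp (L₀ * (T - t)) * ∑ j : Fin d, (K j + (T - t) * 𝔏 j) * |x j - 𝔵 j| := by
    intro t ht x 𝔵
    rw [abs_sub_le_iff]
    constructor
    · have hk := key (x - 𝔵) t ht 𝔵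
      have harg : 𝔵 + (x - 𝔵) = x := by abel
      rw [harg] at hk
      have hs : ∑ j : Fin d, (K j + (T-t)*𝔏 j)*|(x - 𝔵) j|
          = ∑ j : Fin d, (K j + (T-t)*𝔏 j)*|x j - 𝔵 j| :=
        Finset.sum_congr rfl (fun j _ => by rw [Pi.sub_apply])
      rw [hs] at hk
      exact hk
    · have hk := key (𝔵 - x) t ht x
      have harg : x + (𝔵 - x) = 𝔵 := by abel
      rw [harg] at hk
      have hs : ∑ j : Fin d, (K j + (T-t)*𝔏 j)*|(𝔵 - x) j|
          = ∑ j : Fin d, (K j + (T-t)*𝔏 j)*|x j - 𝔵 j| :=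
        Finset.sum_congr rfl (fun j _ => by rw [Pi.sub_apply, abs_sub_comm])
      rw [hs] at hk
      exact hk
  refine ⟨partA, ?_⟩
  intro t ht x i
  have htI : t ∈ Set.Icc (0:ℝ) T := ⟨ht.1.le, ht.2.le⟩
  have hdiffu : Differentiable ℝ (u t) := (hux t htI).differentiable (by norm_num)
  have hder : HasDerivAt (fun τ : ℝ => u t (x + τ • (Pi.single i 1 : Fin d → ℝ)))
      (pderiv d (u t) x i) 0 := by
    have h1 := line_hasDerivAt (u t) x (Pi.single i 1) 0 (hdiffu _)
    unfold pderiv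
    simpa using h1
  have hbound : ∀ τ : ℝ, |u t (x + τ • (Pi.single i 1 : Fin d → ℝ)) - u t x|
      ≤ Real.exp (L₀ * (T - t)) * (K i + (T - t) * 𝔏 i) * |τ| := by
    intro τ
    have hA1 := partA t htI (x + τ • (Pi.single i 1 : Fin d → ℝ)) x
    have hsum : ∑ j : Fin d, (K j + (T - t) * 𝔏 j)
        * |(x + τ • (Pi.single i 1 : Fin d → ℝ)) j - x j| = (K i + (T - t)*𝔏 i) * |τ| := by
      have hpt : ∀ j, (x + τ • (Pi.single i 1 : Fin d → ℝ)) j - x j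
          = τ * (Pi.single i 1 : Fin d → ℝ) j := by
        intro j
        simp [Pi.add_apply, Pi.smul_apply, smul_eq_mul]
      rw [Finset.sum_congr rfl (fun j _ => by rw [hpt j])]
      exact sum_abs_single (fun j => K j + (T-t)*𝔏 j) i τ
    rw [hsum] at hA1
    rw [mul_assoc]
    exact hA1
  have hslope := hasDerivAt_iff_tendsto_slope.1 hder
  have habs := hslope.abs
  refine le_of_tendsto habs ?_
  filter_upwards [self_mem_nhdsWithin] with τ hτ
  have hτ0 : τ ≠ 0 := hτ
  rw [slope_def_field]
  have hF0 : u t (x + (0:ℝ) • (Pi.single i 1 : Fin d → ℝ)) = u t x := by simp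
  rw [hF0, sub_zero, abs_div]
  rw [div_le_iff₀ (abs_pos.mpr hτ0)]
  exact hbound τ
end
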